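/- arXiv:2601.07502 — 2 statements merged into one kernel-verified Lean document; each statement's English description precedes it below -/
import Mathlib

section
/- Let 0 ≤ r ≤ 1 and for n ≥ 1 set u_{n−1} = Σ_{k=1}^n (Γ(2−r)·Γ(k)/Γ(k+1−r))². Then: (i) if 1/2 < r ≤ 1, lim_{n→∞} u_{n−1}/n^{2r−1} = (Γ(2−r))²/(2r−1); (ii) if r = 1/2, lim_{n→∞} u_{n−1}/log n = π/4; (iii) if 0 ≤ r < 1/2, u_{n−1} converges as n → ∞ to the finite value ₃F₂(1,1,1; 2−r,2−r; 1) = Σ_{j=0}^∞ (j!)²·(Γ(2−r))²/(Γ(j+2−r))². -/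
open Filter Real
open Topology

noncomputable section

/-- The deterministic sequence `u_{n-1} = ∑_{k=1}^n (Γ(2-r) Γ(k) / Γ(k+1-r))²`. -/
def useq (r : ℝ) (n : ℕ) : ℝ :=
  ∑ k ∈ Finset.Icc 1 n,
    (Real.Gamma (2 - r) * Real.Gamma (k : ℝ) / Real.Gamma ((k : ℝ) + 1 - r)) ^ 2

lemma gamma_mul_prod (s : ℝ) (hs : 0 < s) (n : ℕ) :
    Real.Gamma s * ∏ j ∈ Finset.range (n + 1), (s + j) = Real.Gamma (s + n + 1) := by
  induction n with
  | zero => simp [Real.Gamma_add_one hs.ne', mul_comm]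
  | succ n ih =>
      rw [Finset.prod_range_succ, ← mul_assoc, ih]
      have h1 : (0:ℝ) < s + n + 1 := by positivity
      rw [show s + (n + 1 : ℕ) + 1 = (s + n + 1) + 1 by push_cast; ring,
        Real.Gamma_add_one h1.ne']
      push_cast; ring

lemma g_tendsto (s : ℝ) (hs : 0 < s) :
    Tendsto (fun n : ℕ => (n : ℝ) ^ s * n.factorial / Real.Gamma (s + n + 1)) atTop (𝓝 1) := by
  have hG : Real.Gamma s ≠ 0 := (Real.Gamma_pos_of_pos hs).ne'
  have h := (Real.GammaSeq_tendsto_Gamma s).div_const (Real.Gamma s)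
  rw [div_self hG] at h
  refine h.congr fun n => ?_
  have key := gamma_mul_prod s hs n
  rw [Real.GammaSeq, div_div, mul_comm _ (Real.Gamma s), key]

lemma nat_div_tendsto (c : ℝ) :
    Tendsto (fun n : ℕ => ((n : ℝ) + c) / n) atTop (𝓝 1) := by
  have h : Tendsto (fun n : ℕ => 1 + c / n) atTop (𝓝 (1 + 0)) :=
    tendsto_const_nhds.add (tendsto_const_div_atTop_nhds_zero_nat c)
  rw [add_zero] at h
  refine h.congr' ?_
  filter_upwards [eventually_ge_atTop 1] with n hn
  have hN : (0:ℝ) < n := by exact_mod_cast hn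
  field_simp

lemma nat_div_rpow_tendsto (c p : ℝ) :
    Tendsto (fun n : ℕ => (((n : ℝ) + c) / n) ^ p) atTop (𝓝 1) := by
  have hc : ContinuousAt (fun x : ℝ => x ^ p) 1 :=
    Real.continuousAt_rpow_const 1 p (Or.inl one_ne_zero)
  have := hc.tendsto.comp (nat_div_tendsto c)
  rw [Real.one_rpow] at this
  exact this

lemma W_tendsto (r : ℝ) (hr1 : r ≤ 1) :
    Tendsto (fun k : ℕ =>
      Real.Gamma (2 - r) * Real.Gamma (k : ℝ) / Real.Gamma ((k : ℝ) + 1 - r) / (k : ℝ) ^ (r - 1))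
      atTop (𝓝 (Real.Gamma (2 - r))) := by
  have hs : (0:ℝ) < 2 - r := by linarith
  rw [← Filter.tendsto_add_atTop_iff_nat 2]
  have main : Tendsto (fun n : ℕ =>
      Real.Gamma (2 - r) * ((n : ℝ) ^ (2 - r) * n.factorial / Real.Gamma ((2 - r) + n + 1)) *
        (((n : ℝ) + 1) / n) * ((((n : ℝ) + 2) / n) ^ (1 - r))) atTop
      (𝓝 (Real.Gamma (2 - r) * 1 * 1 * 1)) :=
    ((tendsto_const_nhds.mul (g_tendsto (2 - r) hs)).mul (nat_div_tendsto 1)).mul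
      (nat_div_rpow_tendsto 2 (1 - r))
  rw [mul_one, mul_one, mul_one] at main
  refine main.congr' ?_
  filter_upwards [eventually_ge_atTop 1] with n hn
  have hN : (0:ℝ) < n := by exact_mod_cast hn
  have hP : (0:ℝ) < Real.Gamma ((2 - r) + n + 1) := Real.Gamma_pos_of_pos (by positivity)
  have hfac : Real.Gamma ((n:ℝ) + 2) = ((n+1).factorial : ℝ) := by
    rw [show ((n:ℝ) + 2) = ((n + 1 : ℕ) : ℝ) + 1 by push_cast; ring,
      Real.Gamma_nat_eq_factorial]
  have hc2 : (((n + 2 : ℕ)) : ℝ) = (n : ℝ) + 2 := by push_cast; ring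
  rw [hc2, hfac, show ((n:ℝ) + 2) + 1 - r = (2 - r) + n + 1 by ring]
  rw [Real.div_rpow (by positivity) (by positivity) (1 - r),
    show (2 - r : ℝ) = 1 + (1 - r) by ring, Real.rpow_add hN, Real.rpow_one,
    show ((n:ℝ) + 2) ^ (1 - r) = (((n:ℝ) + 2) ^ (r - 1))⁻¹ by
      rw [show (1 - r : ℝ) = -(r - 1) by ring, Real.rpow_neg (by positivity)]]
  have hB : (0:ℝ) < (n:ℝ) ^ (1 - r) := Real.rpow_pos_of_pos hN _
  have hA : (0:ℝ) < ((n:ℝ) + 2) ^ (r - 1) := Real.rpow_pos_of_pos (by positivity) _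
  push_cast [Nat.factorial_succ]
  set A := ((n:ℝ) + 2) ^ (r - 1) with hAdef
  set B := (n:ℝ) ^ (1 - r) with hBdef
  set P := Real.Gamma ((2 - r) + (n:ℝ) + 1) with hPdef
  rw [hPdef] at hP
  field_simp [hN.ne', hA.ne', hB.ne', hP.ne']

lemma E_tendsto (r : ℝ) (hr1 : r ≤ 1) :
    Tendsto (fun k : ℕ =>
      (Real.Gamma (2 - r) * Real.Gamma (k : ℝ) / Real.Gamma ((k : ℝ) + 1 - r)) ^ 2
        / (k : ℝ) ^ (2 * r - 2)) atTop (𝓝 (Real.Gamma (2 - r) ^ 2)) := by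
  have h := (W_tendsto r hr1).pow 2
  refine h.congr fun k => ?_
  rw [div_pow]
  congr 1
  rw [← Real.rpow_natCast ((k:ℝ) ^ (r - 1)) 2, ← Real.rpow_mul (Nat.cast_nonneg k)]
  norm_num
  ring_nf

lemma stolz {a b : ℕ → ℝ} {L : ℝ} (hb : ∀ n, b n < b (n + 1))
    (hbtop : Tendsto b atTop atTop)
    (h : Tendsto (fun n => (a (n + 1) - a n) / (b (n + 1) - b n)) atTop (𝓝 L)) :
    Tendsto (fun n => a n / b n) atTop (𝓝 L) := by
  rw [Metric.tendsto_atTop] at h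
  rw [Metric.tendsto_nhds]
  intro ε hε
  obtain ⟨N, hN⟩ := h (ε / 2) (by linarith)
  obtain ⟨C, hC⟩ : ∃ C, C = |a N - L * b N| + ε / 2 * |b N| := ⟨_, rfl⟩
  have key : ∀ n, N ≤ n → |a n - L * b n| ≤ C + ε / 2 * b n := by
    intro n hn
    have tel_a : a n - a N = ∑ i ∈ Finset.Ico N n, (a (i + 1) - a i) := by
      rw [Finset.sum_Ico_eq_sub _ hn, Finset.sum_range_sub, Finset.sum_range_sub]; ring
    have tel_b : b n - b N = ∑ i ∈ Finset.Ico N n, (b (i + 1) - b i) := by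
      rw [Finset.sum_Ico_eq_sub _ hn, Finset.sum_range_sub, Finset.sum_range_sub]; ring
    have hsum : |(a n - a N) - L * (b n - b N)| ≤ ε / 2 * (b n - b N) := by
      have heq : (a n - a N) - L * (b n - b N)
          = ∑ i ∈ Finset.Ico N n, ((a (i + 1) - a i) - L * (b (i + 1) - b i)) := by
        rw [tel_a, tel_b, Finset.mul_sum, ← Finset.sum_sub_distrib]
      rw [heq, tel_b, Finset.mul_sum]
      refine (Finset.abs_sum_le_sum_abs _ _).trans (Finset.sum_le_sum fun i hi => ?_)
      have hiN : N ≤ i := (Finset.mem_Ico.mp hi).1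
      have hd : 0 < b (i + 1) - b i := sub_pos.2 (hb i)
      have hdist := hN i hiN
      rw [Real.dist_eq] at hdist
      have hrw : (a (i + 1) - a i) / (b (i + 1) - b i) - L
          = ((a (i + 1) - a i) - L * (b (i + 1) - b i)) / (b (i + 1) - b i) := by
        field_simp
      rw [hrw, abs_div, abs_of_pos hd, div_lt_iff₀ hd] at hdist
      linarith
    calc |a n - L * b n| = |(a N - L * b N) + ((a n - a N) - L * (b n - b N))| := by
          congr 1; ring
      _ ≤ |a N - L * b N| + |(a n - a N) - L * (b n - b N)| := abs_add_le _ _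
      _ ≤ |a N - L * b N| + ε / 2 * (b n - b N) := by linarith
      _ ≤ C + ε / 2 * b n := by
          have h1 : -(b N) ≤ |b N| := neg_le_abs (b N)
          have h2 : 0 < ε / 2 := by linarith
          rw [hC]
          nlinarith
  filter_upwards [eventually_ge_atTop N,
    hbtop.eventually_gt_atTop (max (2 * C / ε) 0)] with n hn hbn
  have hbpos : 0 < b n := lt_of_le_of_lt (le_max_right _ _) hbn
  have hCb : C < ε / 2 * b n := by
    have h1 : 2 * C / ε < b n := lt_of_le_of_lt (le_max_left _ _) hbn
    rw [div_lt_iff₀ hε, mul_comm] at h1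
    linarith
  rw [Real.dist_eq, show a n / b n - L = (a n - L * b n) / b n by field_simp,
    abs_div, abs_of_pos hbpos, div_lt_iff₀ hbpos]
  calc |a n - L * b n| ≤ C + ε / 2 * b n := key n hn
    _ < ε * b n := by linarith

lemma rpow_slope_tendsto (s : ℝ) :
    Tendsto (fun n : ℕ => (n : ℝ) * ((1 + 1 / (n : ℝ)) ^ s - 1)) atTop (𝓝 s) := by
  have hd : HasDerivAt (fun x : ℝ => x ^ s) (s * (1 : ℝ) ^ (s - 1)) 1 :=
    Real.hasDerivAt_rpow_const (Or.inl one_ne_zero)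
  rw [Real.one_rpow, mul_one] at hd
  have h₁ := hasDerivAt_iff_tendsto_slope.mp hd
  have h₂ : Tendsto (fun n : ℕ => 1 + 1 / (n : ℝ)) atTop (𝓝[≠] (1 : ℝ)) := by
    apply tendsto_nhdsWithin_of_tendsto_nhds_of_eventually_within
    · have : Tendsto (fun n : ℕ => 1 + 1 / (n : ℝ)) atTop (𝓝 (1 + 0)) :=
        tendsto_const_nhds.add (tendsto_const_div_atTop_nhds_zero_nat 1)
      simpa using this
    · filter_upwards [eventually_ge_atTop 1] with n hn
      have hN : (0:ℝ) < n := by exact_mod_cast hn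
      have : (0:ℝ) < 1 / (n:ℝ) := by positivity
      simp only [Set.mem_compl_iff, Set.mem_singleton_iff]
      intro hcontra
      nlinarith
  have := h₁.comp h₂
  refine this.congr' ?_
  filter_upwards [eventually_ge_atTop 1] with n hn
  have hN : (0:ℝ) < n := by exact_mod_cast hn
  simp only [Function.comp_apply, slope_def_field]
  rw [Real.one_rpow]
  rw [show (1 : ℝ) + 1 / (n:ℝ) - 1 = 1 / (n:ℝ) by ring, div_div_eq_mul_div]
  ring

lemma useq_succ_sub (r : ℝ) (n : ℕ) :
    useq r (n + 1) - useq r n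
      = (Real.Gamma (2 - r) * Real.Gamma (((n + 1 : ℕ)) : ℝ) /
          Real.Gamma ((((n + 1 : ℕ)) : ℝ) + 1 - r)) ^ 2 := by
  rw [useq, useq, Finset.sum_Icc_succ_top (Nat.le_add_left 1 n)]
  ring

lemma part1 (r : ℝ) (hr : 1 / 2 < r) (hr1 : r ≤ 1) :
    Tendsto (fun n : ℕ => useq r n / (n : ℝ) ^ (2 * r - 1)) atTop
      (𝓝 (Real.Gamma (2 - r) ^ 2 / (2 * r - 1))) := by
  have hs : (0:ℝ) < 2 * r - 1 := by linarith
  apply stolz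
  · intro n
    exact Real.rpow_lt_rpow (Nat.cast_nonneg n) (by push_cast; linarith) hs
  · exact (tendsto_rpow_atTop hs).comp tendsto_natCast_atTop_atTop
  · have hE : Tendsto (fun n : ℕ =>
        (Real.Gamma (2 - r) * Real.Gamma (((n + 1 : ℕ)) : ℝ) /
            Real.Gamma ((((n + 1 : ℕ)) : ℝ) + 1 - r)) ^ 2 / (((n + 1 : ℕ)) : ℝ) ^ (2 * r - 2))
        atTop (𝓝 (Real.Gamma (2 - r) ^ 2)) :=
      (E_tendsto r hr1).comp (tendsto_add_atTop_nat 1)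
    have hl1 := nat_div_rpow_tendsto 1 (2 * r - 2)
    have hd := rpow_slope_tendsto (2 * r - 1)
    have main := (hE.mul hl1).div hd hs.ne'
    rw [mul_one] at main
    refine main.congr' ?_
    filter_upwards [eventually_ge_atTop 1] with n hn
    have hN : (0:ℝ) < n := by exact_mod_cast hn
    simp only [Pi.div_apply]
    rw [useq_succ_sub]
    push_cast
    obtain ⟨T, hT⟩ : ∃ T, T = (Real.Gamma (2 - r) * Real.Gamma ((n : ℝ) + 1) /
        Real.Gamma ((n : ℝ) + 1 + 1 - r)) ^ 2 := ⟨_, rfl⟩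
    rw [← hT]
    rw [show (1:ℝ) + 1 / (n:ℝ) = ((n:ℝ) + 1) / n by field_simp]
    rw [Real.div_rpow (by positivity) hN.le (2 * r - 1),
      Real.div_rpow (by positivity) hN.le (2 * r - 2)]
    have e1 : ((n:ℝ) + 1) ^ (2 * r - 1) = ((n:ℝ) + 1) * ((n:ℝ) + 1) ^ (2 * r - 2) := by
      rw [show (2 * r - 1 : ℝ) = 1 + (2 * r - 2) by ring, Real.rpow_add (by positivity),
        Real.rpow_one]
    have e2 : (n:ℝ) ^ (2 * r - 1) = (n:ℝ) * (n:ℝ) ^ (2 * r - 2) := by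
      rw [show (2 * r - 1 : ℝ) = 1 + (2 * r - 2) by ring, Real.rpow_add hN, Real.rpow_one]
    have hlt : (n:ℝ) ^ (2 * r - 1) < ((n:ℝ) + 1) ^ (2 * r - 1) :=
      Real.rpow_lt_rpow hN.le (by linarith) hs
    rw [e1, e2] at hlt ⊢
    obtain ⟨U, hU⟩ : ∃ U, U = (n:ℝ) ^ (2 * r - 2) := ⟨_, rfl⟩
    obtain ⟨V, hV⟩ : ∃ V, V = ((n:ℝ) + 1) ^ (2 * r - 2) := ⟨_, rfl⟩
    have hU0 : (0:ℝ) < U := hU ▸ Real.rpow_pos_of_pos hN _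
    have hV0 : (0:ℝ) < V := hV ▸ Real.rpow_pos_of_pos (by positivity) _
    rw [← hU, ← hV] at hlt ⊢
    have hden : ((n:ℝ) + 1) * V - (n:ℝ) * U ≠ 0 := (sub_pos.2 hlt).ne'
    field_simp

lemma nat_ratio_tendsto : Tendsto (fun n : ℕ => ((n : ℝ) + 1) / ((n : ℝ) + 2)) atTop (𝓝 1) := by
  have h : Tendsto (fun n : ℕ => (1 + 1 / (n : ℝ)) / (1 + 2 / (n : ℝ))) atTop
      (𝓝 ((1 + 0) / (1 + 0))) :=
    (tendsto_const_nhds.add (tendsto_const_div_atTop_nhds_zero_nat 1)).div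
      (tendsto_const_nhds.add (tendsto_const_div_atTop_nhds_zero_nat 2)) (by norm_num)
  norm_num at h
  refine h.congr' ?_
  filter_upwards [eventually_ge_atTop 1] with n hn
  have hN : (0:ℝ) < n := by exact_mod_cast hn
  field_simp

lemma part2 (r : ℝ) (hr : r = 1 / 2) :
    Tendsto (fun n : ℕ => useq r n / Real.log n) atTop (𝓝 (Real.pi / 4)) := by
  subst hr
  have hG2 : Real.Gamma (2 - 1 / 2 : ℝ) ^ 2 = Real.pi / 4 := by
    rw [show (2 - 1 / 2 : ℝ) = 1 / 2 + 1 by norm_num, Real.Gamma_add_one (by norm_num),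
      Real.Gamma_one_half_eq, mul_pow, Real.sq_sqrt Real.pi_nonneg]
    ring
  rw [← Filter.tendsto_add_atTop_iff_nat 1]
  refine stolz (a := fun n => useq (1 / 2) (n + 1))
    (b := fun n => Real.log (((n + 1 : ℕ)) : ℝ)) ?_ ?_ ?_
  · intro n
    apply Real.log_lt_log
    · exact_mod_cast n.succ_pos
    · exact_mod_cast Nat.lt_succ_self (n + 1)
  · exact Real.tendsto_log_atTop.comp (tendsto_natCast_atTop_atTop.comp (tendsto_add_atTop_nat 1))
  · have hE : Tendsto (fun n : ℕ =>
        (Real.Gamma (2 - 1 / 2) * Real.Gamma (((n + 2 : ℕ)) : ℝ) /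
            Real.Gamma ((((n + 2 : ℕ)) : ℝ) + 1 - 1 / 2)) ^ 2
          / (((n + 2 : ℕ)) : ℝ) ^ (2 * (1 / 2 : ℝ) - 2)) atTop
        (𝓝 (Real.Gamma (2 - 1 / 2) ^ 2)) :=
      (E_tendsto (1 / 2) (by norm_num)).comp (tendsto_add_atTop_nat 2)
    have hd : Tendsto (fun n : ℕ => ((n : ℝ) + 1) * Real.log (1 + 1 / ((n : ℝ) + 1))) atTop
        (𝓝 1) :=
      (Real.tendsto_mul_log_one_add_div_atTop 1).comp
        (tendsto_atTop_add_const_right atTop 1 tendsto_natCast_atTop_atTop)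
    have main := (hE.mul nat_ratio_tendsto).div hd one_ne_zero
    rw [mul_one, div_one, hG2] at main
    refine main.congr' ?_
    filter_upwards [] with n
    simp only [Pi.div_apply]
    rw [useq_succ_sub (1 / 2) (n + 1),
      show (((n + 1 + 1 : ℕ)) : ℝ) = (n : ℝ) + 2 by push_cast; ring,
      show (((n + 1 : ℕ)) : ℝ) = (n : ℝ) + 1 by push_cast; ring]
    obtain ⟨T, hT⟩ : ∃ T, T = (Real.Gamma (2 - 1 / 2) * Real.Gamma ((n : ℝ) + 2) /
        Real.Gamma ((n : ℝ) + 2 + 1 - 1 / 2)) ^ 2 := ⟨_, rfl⟩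
    rw [← hT]
    rw [show (2 * (1 / 2 : ℝ) - 2) = -1 by norm_num, Real.rpow_neg_one]
    have hn1 : (0:ℝ) < (n : ℝ) + 1 := by positivity
    have hn2 : (0:ℝ) < (n : ℝ) + 2 := by positivity
    rw [show (1 : ℝ) + 1 / ((n : ℝ) + 1) = ((n : ℝ) + 2) / ((n : ℝ) + 1) by
      field_simp; ring]
    rw [Real.log_div hn2.ne' hn1.ne']
    have hld : (0:ℝ) < Real.log ((n:ℝ) + 2) - Real.log ((n:ℝ) + 1) :=
      sub_pos.2 (Real.log_lt_log hn1 (by linarith))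
    field_simp [hld.ne']

lemma part3 (r : ℝ) (hr1 : r ≤ 1) (hr : r < 1 / 2) :
    Tendsto (fun n : ℕ => useq r n) atTop
      (𝓝 (∑' j : ℕ,
        (Nat.factorial j : ℝ) ^ 2 * Real.Gamma (2 - r) ^ 2 /
          Real.Gamma ((j : ℝ) + 2 - r) ^ 2)) := by
  have hfT : ∀ j : ℕ,
      (Nat.factorial j : ℝ) ^ 2 * Real.Gamma (2 - r) ^ 2 / Real.Gamma ((j : ℝ) + 2 - r) ^ 2
        = (Real.Gamma (2 - r) * Real.Gamma (((j + 1 : ℕ)) : ℝ) /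
            Real.Gamma ((((j + 1 : ℕ)) : ℝ) + 1 - r)) ^ 2 := by
    intro j
    have h1 : Real.Gamma (((j + 1 : ℕ)) : ℝ) = (j.factorial : ℝ) := by
      push_cast
      exact Real.Gamma_nat_eq_factorial j
    rw [h1, show ((((j + 1 : ℕ)) : ℝ) + 1 - r) = ((j : ℝ) + 2 - r) by push_cast; ring,
      div_pow, mul_pow]
    ring
  have hsum : Summable (fun k : ℕ =>
      (Real.Gamma (2 - r) * Real.Gamma (k : ℝ) / Real.Gamma ((k : ℝ) + 1 - r)) ^ 2) := by
    have hg : Summable (fun k : ℕ => (k : ℝ) ^ (2 * r - 2)) :=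
      Real.summable_nat_rpow.mpr (by linarith)
    refine summable_of_isBigO_nat hg ?_
    have h1 := (E_tendsto r hr1).isBigO_one ℝ
    have h2 := h1.mul (Asymptotics.isBigO_refl (fun k : ℕ => (k : ℝ) ^ (2 * r - 2)) atTop)
    refine h2.congr' ?_ ?_
    · filter_upwards [eventually_ge_atTop 1] with k hk
      have hk0 : ((k : ℝ) ^ (2 * r - 2)) ≠ 0 :=
        (Real.rpow_pos_of_pos (by exact_mod_cast hk) _).ne'
      exact div_mul_cancel₀ _ hk0
    · filter_upwards with k
      simp
  have hfs : Summable (fun j : ℕ =>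
      (Nat.factorial j : ℝ) ^ 2 * Real.Gamma (2 - r) ^ 2 /
        Real.Gamma ((j : ℝ) + 2 - r) ^ 2) :=
    ((summable_nat_add_iff 1).mpr hsum).congr fun j => (hfT j).symm
  refine hfs.hasSum.tendsto_sum_nat.congr fun n => ?_
  induction n with
  | zero => simp [useq]
  | succ n ih => rw [Finset.sum_range_succ, ih, hfT n, ← useq_succ_sub r n]; ring

/-- Asymptotics of `u_{n-1} = ∑_{k=1}^n (Γ(2-r)Γ(k)/Γ(k+1-r))²` for
`0 ≤ r ≤ 1`: (i) if `1/2 < r ≤ 1`, `u_{n-1}/n^{2r-1} → Γ(2-r)²/(2r-1)`;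
(ii) if `r = 1/2`, `u_{n-1}/log n → π/4`; (iii) if `0 ≤ r < 1/2`, `u_{n-1}` converges to
`₃F₂(1,1,1;2-r,2-r;1) = ∑_{j≥0} (j!)² Γ(2-r)² / Γ(j+2-r)²`. -/
theorem useq_asymptotics (r : ℝ) (hr0 : 0 ≤ r) (hr1 : r ≤ 1) :
    (1 / 2 < r →
      Tendsto (fun n : ℕ => useq r n / (n : ℝ) ^ (2 * r - 1)) atTop
        (nhds (Real.Gamma (2 - r) ^ 2 / (2 * r - 1)))) ∧
    (r = 1 / 2 →
      Tendsto (fun n : ℕ => useq r n / Real.log n) atTop (nhds (Real.pi / 4))) ∧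
    (r < 1 / 2 →
      Tendsto (fun n : ℕ => useq r n) atTop
        (nhds (∑' j : ℕ,
          (Nat.factorial j : ℝ) ^ 2 * Real.Gamma (2 - r) ^ 2 /
            Real.Gamma ((j : ℝ) + 2 - r) ^ 2))) :=
  ⟨fun hr => part1 r hr hr1, fun hr => part2 r hr, fun hr => part3 r hr1 hr⟩

end
end

section
/- Let b = P(Y_k = 0) for k ≥ 2. Then the following quadratic strong law holds almost surely: lim_{n→∞} (1/log(n+1)) · Σ_{k=1}^n (Z_k* − (k−1)(1−b))² / (k(k+1)) = b(1−b). -/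
open MeasureTheory ProbabilityTheory Filter

noncomputable section

/-- The random step sizes of the MERW with random step sizes: `(Y_n)_{n ≥ 2}` is an i.i.d.
sequence of nonnegative real random variables with `P(Y_n = 0) = b`. -/
structure RandomStepSizes {Ω : Type*} [MeasurableSpace Ω] (P : Measure Ω) (b : ℝ) where
  Y : ℕ → Ω → ℝ
  hb : b ∈ Set.Icc (0 : ℝ) 1
  measY : ∀ n, Measurable (Y n)
  hnonneg : ∀ n, 2 ≤ n → ∀ ω, 0 ≤ Y n ω
  /-- `(Y_n)_{n ≥ 2}` are independent. -/
  hindep : iIndepFun (fun n : ℕ => Y (n + 2)) P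
  /-- `(Y_n)_{n ≥ 2}` are identically distributed. -/
  hident : ∀ n, 2 ≤ n → IdentDistrib (Y n) (Y 2) P P
  /-- `P(Y_n = 0) = b` for `n ≥ 2`. -/
  hzero : P {ω | Y 2 ω = 0} = ENNReal.ofReal b

namespace RandomStepSizes

variable {Ω : Type*} [MeasurableSpace Ω] {P : Measure Ω} {b : ℝ}

/-- The number of moves up to time `n`: `Z_n* = 1 + ∑_{k=2}^n 𝟙{Y_k ≠ 0}` (the first
step is always a move). -/
def Zstar (W : RandomStepSizes P b) (n : ℕ) (ω : Ω) : ℝ :=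
  1 + ∑ k ∈ Finset.Icc 2 n, if W.Y k ω = 0 then (0 : ℝ) else 1

end RandomStepSizes

set_option linter.unusedSectionVars false

namespace QSL

set_option linter.unusedSectionVars false

variable {Ω : Type*} [MeasurableSpace Ω] {P : Measure Ω} [IsProbabilityMeasure P]
  {b : ℝ} (W : RandomStepSizes P b)

/-- the centered indicator step -/
def V (i : ℕ) (ω : Ω) : ℝ := (if W.Y (i + 2) ω = 0 then (0:ℝ) else 1) - (1 - b)

def stepf (b : ℝ) : ℝ → ℝ := fun y => (if y = 0 then (0:ℝ) else 1) - (1 - b)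

lemma measurable_stepf : Measurable (stepf b) := by
  apply Measurable.sub _ measurable_const
  apply Measurable.ite _ measurable_const measurable_const
  rw [Set.setOf_eq_eq_singleton]
  exact measurableSet_singleton 0

lemma measV (i : ℕ) : Measurable (V W i) :=
  measurable_stepf.comp (W.measY (i + 2))

lemma boundV (i : ℕ) (ω : Ω) : |V W i ω| ≤ 1 := by
  have h1 := W.hb.1; have h2 := W.hb.2
  unfold V; split <;> (rw [abs_le]; constructor <;> linarith)

lemma indepV : iIndepFun (V W) P :=
  W.hindep.comp (fun _ => stepf b) (fun _ => measurable_stepf)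

lemma identA (i : ℕ) : P {ω | W.Y (i + 2) ω = 0} = ENNReal.ofReal b := by
  have hid := W.hident (i + 2) (by omega)
  have h1 : {ω | W.Y (i + 2) ω = 0} = W.Y (i + 2) ⁻¹' {0} := rfl
  have h2 : {ω | W.Y 2 ω = 0} = W.Y 2 ⁻¹' {0} := rfl
  rw [h1, ← Measure.map_apply (W.measY _) (measurableSet_singleton 0), hid.map_eq,
    Measure.map_apply (W.measY _) (measurableSet_singleton 0), ← h2, W.hzero]

lemma intb {g : Ω → ℝ} (hg : Measurable g) (C : ℝ) (h : ∀ ω, |g ω| ≤ C) :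
    Integrable g P :=
  ⟨hg.aestronglyMeasurable, HasFiniteIntegral.of_bounded (C := C)
    (ae_of_all _ (fun ω => by rw [Real.norm_eq_abs]; exact h ω))⟩

lemma intV (i : ℕ) : Integrable (V W i) P := intb (measV W i) 1 (boundV W i)

lemma V_eq_indicator (i : ℕ) (ω : Ω) :
    V W i ω = b - Set.indicator {ω' | W.Y (i + 2) ω' = 0} (fun _ => (1:ℝ)) ω := by
  unfold V
  by_cases h : W.Y (i + 2) ω = 0
  · simp [Set.indicator_apply, Set.mem_setOf_eq, h]
  · simp [Set.indicator_apply, Set.mem_setOf_eq, h]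

lemma measA (i : ℕ) : MeasurableSet {ω | W.Y (i + 2) ω = 0} := by
  have : {ω | W.Y (i + 2) ω = 0} = W.Y (i + 2) ⁻¹' {0} := rfl
  rw [this]; exact (W.measY _) (measurableSet_singleton 0)

lemma int_indicatorA (i : ℕ) :
    ∫ ω, Set.indicator {ω' | W.Y (i + 2) ω' = 0} (fun _ => (1:ℝ)) ω ∂P = b := by
  rw [integral_indicator_const (1:ℝ) (measA W i), measureReal_def, identA W i, smul_eq_mul, mul_one,
    ENNReal.toReal_ofReal W.hb.1]

lemma EV (i : ℕ) : ∫ ω, V W i ω ∂P = 0 := by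
  have : ∀ ω, V W i ω = b - Set.indicator {ω' | W.Y (i + 2) ω' = 0} (fun _ => (1:ℝ)) ω :=
    V_eq_indicator W i
  rw [integral_congr_ae (ae_of_all _ this), integral_sub (integrable_const b), int_indicatorA]
  · simp
  · exact (integrable_const (1:ℝ)).indicator (measA W i)

lemma EV2 (i : ℕ) : ∫ ω, (V W i ω) ^ 2 ∂P = b * (1 - b) := by
  have hpt : ∀ ω, (V W i ω) ^ 2
      = b ^ 2 + (1 - 2 * b) * Set.indicator {ω' | W.Y (i + 2) ω' = 0} (fun _ => (1:ℝ)) ω := by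
    intro ω
    unfold V
    by_cases h : W.Y (i + 2) ω = 0
    · simp [Set.indicator_apply, Set.mem_setOf_eq, h]; ring
    · simp [Set.indicator_apply, Set.mem_setOf_eq, h]
  rw [integral_congr_ae (ae_of_all _ hpt), integral_add (integrable_const _), integral_const]
  · rw [integral_const_mul, int_indicatorA]; simp; ring
  · exact (((integrable_const (1:ℝ)).indicator (measA W i))).const_mul _

lemma EV4 (i : ℕ) : ∫ ω, (V W i ω) ^ 4 ∂P ≤ 1 := by
  have h : ∀ ω, (V W i ω) ^ 4 ≤ 1 := by
    intro ω
    have := boundV W i ω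
    calc (V W i ω) ^ 4 = (|V W i ω|) ^ 4 := by rw [← abs_pow, abs_of_nonneg (by positivity)]
    _ ≤ 1 ^ 4 := by exact pow_le_pow_left₀ (abs_nonneg _) this 4
    _ = 1 := by norm_num
  calc ∫ ω, (V W i ω) ^ 4 ∂P ≤ ∫ _ω, (1:ℝ) ∂P := by
        apply integral_mono _ (integrable_const 1) h
        exact intb ((measV W i).pow_const 4) 1 (fun ω => by
          rw [abs_of_nonneg (by positivity)]; exact h ω)
  _ = 1 := by simp

end QSL
namespace QSL

variable {Ω : Type*} [MeasurableSpace Ω] {P : Measure Ω} [IsProbabilityMeasure P]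
  {b : ℝ} (W : RandomStepSizes P b)

lemma sigma_nonneg (hb : b ∈ Set.Icc (0:ℝ) 1) : 0 ≤ b * (1 - b) := by
  have := hb.1; have := hb.2; nlinarith

lemma sigma_le_one (hb : b ∈ Set.Icc (0:ℝ) 1) : b * (1 - b) ≤ 1 := by
  have := hb.1; have := hb.2; nlinarith

def SF (t : Finset ℕ) (ω : Ω) : ℝ := ∑ i ∈ t, V W i ω

lemma measSF (t : Finset ℕ) : Measurable (SF W t) :=
  Finset.measurable_sum t (fun i _ => measV W i)

lemma boundSF (t : Finset ℕ) (ω : Ω) : |SF W t ω| ≤ (t.card : ℝ) := by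
  calc |SF W t ω| ≤ ∑ i ∈ t, |V W i ω| := Finset.abs_sum_le_sum_abs _ _
  _ ≤ ∑ _i ∈ t, (1:ℝ) := Finset.sum_le_sum (fun i _ => boundV W i ω)
  _ = t.card := by simp

lemma intSF (t : Finset ℕ) : Integrable (SF W t) P :=
  intb (measSF W t) _ (boundSF W t)

lemma indepSF {t u : Finset ℕ} (h : Disjoint t u) : IndepFun (SF W t) (SF W u) P := by
  have h1 := (indepV W).indepFun_finset t u h (measV W)
  have gmeas : ∀ s : Finset ℕ, Measurable (fun v : {x // x ∈ s} → ℝ => ∑ i, v i) :=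
    fun s => Finset.measurable_sum Finset.univ (fun i _ => measurable_pi_apply i)
  have h2 := h1.comp (gmeas t) (gmeas u)
  have e : ∀ s : Finset ℕ,
      ((fun v : {x // x ∈ s} → ℝ => ∑ i, v i) ∘ fun a (i : s) => V W i a) = SF W s := by
    intro s; funext a
    exact Finset.sum_coe_sort s (fun i => V W i a)
  rwa [e t, e u] at h2

lemma Emul {X Z : Ω → ℝ} (h : IndepFun X Z P) (hX : Measurable X) (hZ : Measurable Z)
    {F G : ℝ → ℝ} (hF : Measurable F) (hG : Measurable G) :
    ∫ ω, F (X ω) * G (Z ω) ∂P = (∫ ω, F (X ω) ∂P) * ∫ ω, G (Z ω) ∂P :=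
  (h.comp hF hG).integral_fun_mul_eq_mul_integral ((hF.comp hX).aestronglyMeasurable)
    ((hG.comp hZ).aestronglyMeasurable)

lemma indepVSF {i : ℕ} {t : Finset ℕ} (hi : i ∉ t) : IndepFun (V W i) (SF W t) P := by
  have h := indepSF W (t := {i}) (u := t) (Finset.disjoint_singleton_left.mpr hi)
  have e : SF W {i} = V W i := funext fun ω => Finset.sum_singleton _ _
  rwa [e] at h

lemma E_SF (t : Finset ℕ) : ∫ ω, SF W t ω ∂P = 0 := by
  unfold SF
  rw [integral_finset_sum t (fun i _ => intV W i)]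
  simp [EV]

lemma E_SF2 (t : Finset ℕ) : ∫ ω, (SF W t ω) ^ 2 ∂P = (t.card : ℝ) * (b * (1 - b)) := by
  classical
  induction t using Finset.induction_on with
  | empty => simp [SF]
  | @insert i t hi ih =>
    have hins : ∀ ω, SF W (insert i t) ω = V W i ω + SF W t ω := fun ω => Finset.sum_insert hi
    have hexp : ∀ ω, (SF W (insert i t) ω) ^ 2
        = (V W i ω) ^ 2 + (2 * (V W i ω * SF W t ω) + (SF W t ω) ^ 2) := by
      intro ω; rw [hins ω]; ring
    have i1 : Integrable (fun ω => (V W i ω) ^ 2) P :=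
      intb ((measV W i).pow_const 2) 1 (fun ω => by
        rw [abs_of_nonneg (by positivity)]
        calc (V W i ω) ^ 2 = |V W i ω| ^ 2 := (sq_abs _).symm
        _ ≤ 1 ^ 2 := pow_le_pow_left₀ (abs_nonneg _) (boundV W i ω) 2
        _ = 1 := one_pow 2)
    have i2 : Integrable (fun ω => V W i ω * SF W t ω) P :=
      intb ((measV W i).mul (measSF W t)) (t.card : ℝ) (fun ω => by
        rw [abs_mul]
        calc |V W i ω| * |SF W t ω| ≤ 1 * (t.card : ℝ) :=
          mul_le_mul (boundV W i ω) (boundSF W t ω) (abs_nonneg _) zero_le_one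
        _ = (t.card : ℝ) := one_mul _)
    have i3 : Integrable (fun ω => (SF W t ω) ^ 2) P :=
      intb ((measSF W t).pow_const 2) ((t.card : ℝ) ^ 2) (fun ω => by
        rw [abs_of_nonneg (by positivity)]
        calc (SF W t ω) ^ 2 = |SF W t ω| ^ 2 := (sq_abs _).symm
        _ ≤ (t.card : ℝ) ^ 2 := pow_le_pow_left₀ (abs_nonneg _) (boundSF W t ω) 2)
    have hVS : ∫ a, V W i a * SF W t a ∂P = 0 := by
      rw [(indepVSF W hi).integral_fun_mul_eq_mul_integral (measV W i).aestronglyMeasurable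
        (measSF W t).aestronglyMeasurable, EV, zero_mul]
    rw [integral_congr_ae (ae_of_all _ hexp), integral_add i1 (by exact (i2.const_mul 2).add i3),
      integral_add (i2.const_mul 2) i3, integral_const_mul, EV2, hVS,
      ih, Finset.card_insert_of_notMem hi]
    push_cast
    ring

end QSL
namespace QSL

variable {Ω : Type*} [MeasurableSpace Ω] {P : Measure Ω} [IsProbabilityMeasure P]
  {b : ℝ} (W : RandomStepSizes P b)

lemma intVpSq (i : ℕ) (t : Finset ℕ) (p q : ℕ) :
    Integrable (fun ω => (V W i ω) ^ p * (SF W t ω) ^ q) P := by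
  apply intb (((measV W i).pow_const p).mul ((measSF W t).pow_const q)) ((t.card : ℝ) ^ q)
  intro ω
  simp only [Pi.mul_apply]; rw [abs_mul, abs_pow, abs_pow]
  calc |V W i ω| ^ p * |SF W t ω| ^ q ≤ 1 ^ p * (t.card : ℝ) ^ q := by
        exact mul_le_mul (pow_le_pow_left₀ (abs_nonneg _) (boundV W i ω) p)
          (pow_le_pow_left₀ (abs_nonneg _) (boundSF W t ω) q) (by positivity) (by positivity)
  _ = (t.card : ℝ) ^ q := by rw [one_pow, one_mul]

lemma intSFpow (t : Finset ℕ) (q : ℕ) : Integrable (fun ω => (SF W t ω) ^ q) P := by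
  apply intb ((measSF W t).pow_const q) ((t.card : ℝ) ^ q)
  intro ω
  rw [abs_pow]
  exact pow_le_pow_left₀ (abs_nonneg _) (boundSF W t ω) q

lemma intVpow (i : ℕ) (q : ℕ) : Integrable (fun ω => (V W i ω) ^ q) P := by
  apply intb ((measV W i).pow_const q) 1
  intro ω
  rw [abs_pow]
  calc |V W i ω| ^ q ≤ 1 ^ q := pow_le_pow_left₀ (abs_nonneg _) (boundV W i ω) q
  _ = 1 := one_pow q

lemma E_SF4 (t : Finset ℕ) : ∫ ω, (SF W t ω) ^ 4 ∂P ≤ 4 * (t.card : ℝ) ^ 2 := by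
  classical
  induction t using Finset.induction_on with
  | empty => simp [SF]
  | @insert i t hi ih =>
    have hins : ∀ ω, SF W (insert i t) ω = V W i ω + SF W t ω := fun ω => Finset.sum_insert hi
    have hexp : ∀ ω, (SF W (insert i t) ω) ^ 4
        = (V W i ω) ^ 4 + (4 * ((V W i ω) ^ 3 * (SF W t ω) ^ 1)
          + (6 * ((V W i ω) ^ 2 * (SF W t ω) ^ 2)
          + (4 * ((V W i ω) ^ 1 * (SF W t ω) ^ 3) + (SF W t ω) ^ 4))) := by
      intro ω; rw [hins ω]; ring
    have hind := indepVSF W hi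
    have h31 : ∫ ω, (V W i ω) ^ 3 * (SF W t ω) ^ 1 ∂P
        = (∫ ω, (V W i ω) ^ 3 ∂P) * ∫ ω, (SF W t ω) ^ 1 ∂P :=
      Emul hind (measV W i) (measSF W t) (measurable_id.pow_const 3) (measurable_id.pow_const 1)
    have h22 : ∫ ω, (V W i ω) ^ 2 * (SF W t ω) ^ 2 ∂P
        = (∫ ω, (V W i ω) ^ 2 ∂P) * ∫ ω, (SF W t ω) ^ 2 ∂P :=
      Emul hind (measV W i) (measSF W t) (measurable_id.pow_const 2) (measurable_id.pow_const 2)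
    have h13 : ∫ ω, (V W i ω) ^ 1 * (SF W t ω) ^ 3 ∂P
        = (∫ ω, (V W i ω) ^ 1 ∂P) * ∫ ω, (SF W t ω) ^ 3 ∂P :=
      Emul hind (measV W i) (measSF W t) (measurable_id.pow_const 1) (measurable_id.pow_const 3)
    have hS1 : ∫ ω, (SF W t ω) ^ 1 ∂P = 0 := by
      simpa using E_SF W t
    have hV1 : ∫ ω, (V W i ω) ^ 1 ∂P = 0 := by simpa using EV W i
    rw [integral_congr_ae (ae_of_all _ hexp)]
    rw [integral_add (intVpow W i 4) (by
      exact ((intVpSq W i t 3 1).const_mul 4).add (((intVpSq W i t 2 2).const_mul 6).add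
        (((intVpSq W i t 1 3).const_mul 4).add (intSFpow W t 4))))]
    rw [integral_add ((intVpSq W i t 3 1).const_mul 4) (by
      exact ((intVpSq W i t 2 2).const_mul 6).add
        (((intVpSq W i t 1 3).const_mul 4).add (intSFpow W t 4)))]
    rw [integral_add ((intVpSq W i t 2 2).const_mul 6) (by
      exact ((intVpSq W i t 1 3).const_mul 4).add (intSFpow W t 4))]
    rw [integral_add ((intVpSq W i t 1 3).const_mul 4) (intSFpow W t 4)]
    rw [integral_const_mul, integral_const_mul, integral_const_mul, h31, h22, h13, hS1, hV1,
      EV2 W i, E_SF2 W t]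
    have hV4 := EV4 W i
    have hσ0 := sigma_nonneg W.hb
    have hσ1 := sigma_le_one W.hb
    have hS4 := ih
    have hcard : ((insert i t).card : ℝ) = (t.card : ℝ) + 1 := by
      rw [Finset.card_insert_of_notMem hi]; push_cast; ring
    rw [hcard]
    have hc0 : (0:ℝ) ≤ (t.card : ℝ) := by positivity
    nlinarith [mul_nonneg hc0 hσ0]

lemma E_SF3_bound (t : Finset ℕ) : |∫ ω, (SF W t ω) ^ 3 ∂P| ≤ (t.card : ℝ) ^ 2 := by
  have h1 : |∫ ω, (SF W t ω) ^ 3 ∂P| ≤ ∫ ω, |SF W t ω| ^ 3 ∂P := by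
    have h0 := norm_integral_le_integral_norm (μ := P) (f := fun ω => (SF W t ω) ^ 3)
    simp only [Real.norm_eq_abs] at h0
    calc |∫ ω, (SF W t ω) ^ 3 ∂P| ≤ ∫ ω, |SF W t ω ^ 3| ∂P := h0
    _ = ∫ ω, |SF W t ω| ^ 3 ∂P := integral_congr_ae (ae_of_all _ fun ω => by simpa using abs_pow (SF W t ω) 3)
  have h2 : ∀ ω, |SF W t ω| ^ 3 ≤ (t.card : ℝ) * (SF W t ω) ^ 2 := by
    intro ω
    calc |SF W t ω| ^ 3 = |SF W t ω| * |SF W t ω| ^ 2 := by ring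
    _ ≤ (t.card : ℝ) * |SF W t ω| ^ 2 := by
      exact mul_le_mul_of_nonneg_right (boundSF W t ω) (by positivity)
    _ = (t.card : ℝ) * (SF W t ω) ^ 2 := by rw [sq_abs]
  have h3 : ∫ ω, |SF W t ω| ^ 3 ∂P ≤ ∫ ω, (t.card : ℝ) * (SF W t ω) ^ 2 ∂P := by
    apply integral_mono _ ((intSFpow W t 2).const_mul _) h2
    apply intb ((measSF W t).abs.pow_const 3) ((t.card : ℝ) ^ 3)
    intro ω
    rw [abs_of_nonneg (by positivity)]
    exact pow_le_pow_left₀ (abs_nonneg _) (boundSF W t ω) 3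
  have h4 : ∫ ω, (t.card : ℝ) * (SF W t ω) ^ 2 ∂P = (t.card : ℝ) * ((t.card : ℝ) * (b * (1-b))) := by
    rw [integral_const_mul, E_SF2]
  have hσ1 := sigma_le_one W.hb
  have hσ0 := sigma_nonneg W.hb
  have hc0 : (0:ℝ) ≤ (t.card : ℝ) := by positivity
  calc |∫ ω, (SF W t ω) ^ 3 ∂P| ≤ (t.card : ℝ) * ((t.card : ℝ) * (b * (1-b))) := by
        rw [← h4]; exact h1.trans h3
  _ ≤ (t.card : ℝ) ^ 2 := by nlinarith

end QSL
namespace QSL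

variable {Ω : Type*} [MeasurableSpace Ω] {P : Measure Ω} [IsProbabilityMeasure P]
  {b : ℝ} (W : RandomStepSizes P b)

def Sr (m : ℕ) (ω : Ω) : ℝ := SF W (Finset.range m) ω

def gg (m : ℕ) (ω : Ω) : ℝ := (1 + Sr W m ω) ^ 2 - (1 + (m : ℝ) * (b * (1 - b)))

lemma measSr (m : ℕ) : Measurable (Sr W m) := measSF W _

lemma boundSr (m : ℕ) (ω : Ω) : |Sr W m ω| ≤ (m : ℝ) := by
  have := boundSF W (Finset.range m) ω
  simpa [Sr] using this

lemma measg (m : ℕ) : Measurable (gg W m) :=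
  (((measurable_const.add (measSr W m)).pow_const 2).sub measurable_const)

def CG (m : ℕ) : ℝ := ((m : ℝ) + 1) ^ 2 + ((m : ℝ) + 1)

lemma CG_nonneg (m : ℕ) : 0 ≤ CG m := by unfold CG; positivity

lemma boundg (m : ℕ) (ω : Ω) : |gg W m ω| ≤ CG m := by
  have hσ0 := sigma_nonneg W.hb
  have hσ1 := sigma_le_one W.hb
  have h1 : |1 + Sr W m ω| ≤ (m : ℝ) + 1 := by
    calc |1 + Sr W m ω| ≤ |(1:ℝ)| + |Sr W m ω| := abs_add_le _ _
    _ ≤ 1 + (m : ℝ) := by rw [abs_one]; exact add_le_add_right (boundSr W m ω) 1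
    _ = (m : ℝ) + 1 := by ring
  have h2 : (1 + Sr W m ω) ^ 2 ≤ ((m : ℝ) + 1) ^ 2 := by
    rw [← sq_abs]; exact pow_le_pow_left₀ (abs_nonneg _) h1 2
  have h3 : (0:ℝ) ≤ 1 + (m : ℝ) * (b * (1 - b)) := by positivity
  have h4 : 1 + (m : ℝ) * (b * (1 - b)) ≤ (m : ℝ) + 1 := by nlinarith [Nat.cast_nonneg (α := ℝ) m]
  unfold gg CG
  rw [abs_sub_comm, abs_sub_le_iff]
  constructor <;> nlinarith [sq_nonneg (1 + Sr W m ω)]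

lemma intg (m : ℕ) : Integrable (gg W m) P := intb (measg W m) (CG m) (boundg W m)

lemma intSr (m : ℕ) : Integrable (Sr W m) P := intSF W _

lemma intSrpow (m q : ℕ) : Integrable (fun ω => (Sr W m ω) ^ q) P := intSFpow W _ q

lemma E_Sr (m : ℕ) : ∫ ω, Sr W m ω ∂P = 0 := E_SF W _

lemma E_Sr2 (m : ℕ) : ∫ ω, (Sr W m ω) ^ 2 ∂P = (m : ℝ) * (b * (1 - b)) := by
  have := E_SF2 W (Finset.range m); simpa [Sr] using this

lemma E_g (m : ℕ) : ∫ ω, gg W m ω ∂P = 0 := by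
  have hpt : ∀ ω, gg W m ω
      = (Sr W m ω) ^ 2 + (2 * Sr W m ω + (-((m : ℝ) * (b * (1 - b))))) := by
    intro ω; unfold gg; ring
  have e1 : ∫ ω, (Sr W m ω ^ 2 + (2 * Sr W m ω + -((m : ℝ) * (b * (1 - b))))) ∂P
      = (∫ ω, Sr W m ω ^ 2 ∂P) + ∫ ω, (2 * Sr W m ω + -((m : ℝ) * (b * (1 - b)))) ∂P :=
    integral_add (intSrpow W m 2) (((intSr W m).const_mul 2).add (integrable_const _))
  have e2 : ∫ ω, (2 * Sr W m ω + -((m : ℝ) * (b * (1 - b)))) ∂P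
      = (∫ ω, 2 * Sr W m ω ∂P) + ∫ _ω, -((m : ℝ) * (b * (1 - b))) ∂P :=
    integral_add ((intSr W m).const_mul 2) (integrable_const _)
  rw [integral_congr_ae (ae_of_all _ hpt), e1, e2, integral_const_mul, integral_const,
    E_Sr2, E_Sr]
  simp

lemma Eg2_bound (k : ℕ) : ∫ ω, (gg W k ω) ^ 2 ∂P ≤ 20 * ((k : ℝ) + 1) ^ 2 := by
  set c : ℝ := (k : ℝ) * (b * (1 - b)) with hc
  have hpt : ∀ ω, (gg W k ω) ^ 2
      = (Sr W k ω) ^ 4 + (4 * (Sr W k ω) ^ 3 + ((4 - 2 * c) * (Sr W k ω) ^ 2 +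
        ((-(4 * c)) * Sr W k ω + c ^ 2))) := by
    intro ω; unfold gg; rw [← hc]; ring
  rw [integral_congr_ae (ae_of_all _ hpt)]
  have e1 : ∫ ω, (Sr W k ω ^ 4 + (4 * Sr W k ω ^ 3 + ((4 - 2 * c) * Sr W k ω ^ 2 +
        ((-(4 * c)) * Sr W k ω + c ^ 2)))) ∂P
      = (∫ ω, Sr W k ω ^ 4 ∂P) + ∫ ω, (4 * Sr W k ω ^ 3 + ((4 - 2 * c) * Sr W k ω ^ 2 +
        ((-(4 * c)) * Sr W k ω + c ^ 2))) ∂P :=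
    integral_add (intSrpow W k 4) (((intSrpow W k 3).const_mul 4).add
      ((((intSrpow W k 2).const_mul (4 - 2*c))).add
        (((intSr W k).const_mul (-(4*c))).add (integrable_const (c ^ 2)))))
  have e2 : ∫ ω, (4 * Sr W k ω ^ 3 + ((4 - 2 * c) * Sr W k ω ^ 2 +
        ((-(4 * c)) * Sr W k ω + c ^ 2))) ∂P
      = (∫ ω, 4 * Sr W k ω ^ 3 ∂P) + ∫ ω, ((4 - 2 * c) * Sr W k ω ^ 2 +
        ((-(4 * c)) * Sr W k ω + c ^ 2)) ∂P :=
    integral_add ((intSrpow W k 3).const_mul 4) ((((intSrpow W k 2).const_mul (4 - 2*c))).add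
        (((intSr W k).const_mul (-(4*c))).add (integrable_const (c ^ 2))))
  have e3 : ∫ ω, ((4 - 2 * c) * Sr W k ω ^ 2 + ((-(4 * c)) * Sr W k ω + c ^ 2)) ∂P
      = (∫ ω, (4 - 2 * c) * Sr W k ω ^ 2 ∂P) + ∫ ω, ((-(4 * c)) * Sr W k ω + c ^ 2) ∂P :=
    integral_add ((intSrpow W k 2).const_mul (4 - 2*c))
      (((intSr W k).const_mul (-(4*c))).add (integrable_const (c ^ 2)))
  have e4 : ∫ ω, ((-(4 * c)) * Sr W k ω + c ^ 2) ∂P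
      = (∫ ω, (-(4 * c)) * Sr W k ω ∂P) + ∫ _ω, c ^ 2 ∂P :=
    integral_add ((intSr W k).const_mul (-(4*c))) (integrable_const (c ^ 2))
  rw [e1, e2, e3, e4, integral_const_mul, integral_const_mul, integral_const_mul, integral_const]
  have h4 : ∫ ω, (Sr W k ω) ^ 4 ∂P ≤ 4 * (k : ℝ) ^ 2 := by
    have := E_SF4 W (Finset.range k); simpa [Sr] using this
  have h3 : |∫ ω, (Sr W k ω) ^ 3 ∂P| ≤ (k : ℝ) ^ 2 := by
    have := E_SF3_bound W (Finset.range k); simpa [Sr] using this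
  have h2 : ∫ ω, (Sr W k ω) ^ 2 ∂P = c := E_Sr2 W k
  have h1 : ∫ ω, Sr W k ω ∂P = 0 := E_Sr W k
  have h3' := abs_le.mp h3
  have hσ0 := sigma_nonneg W.hb
  have hσ1 := sigma_le_one W.hb
  have hk0 : (0:ℝ) ≤ (k:ℝ) := Nat.cast_nonneg k
  have hc0 : 0 ≤ c := by rw [hc]; positivity
  have hck : c ≤ (k:ℝ) := by rw [hc]; nlinarith
  rw [h2, h1]
  simp only [measure_univ, probReal_univ, ENNReal.toReal_one, smul_eq_mul, one_mul, mul_zero, add_zero, zero_add]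
  nlinarith [h3'.1, h3'.2]

lemma Eg2_nonneg (k : ℕ) : 0 ≤ ∫ ω, (gg W k ω) ^ 2 ∂P :=
  integral_nonneg (fun ω => sq_nonneg _)

lemma cross {k l : ℕ} (hkl : k ≤ l) :
    ∫ ω, gg W k ω * gg W l ω ∂P = ∫ ω, (gg W k ω) ^ 2 ∂P := by
  set r := SF W (Finset.Ico k l) with hr
  have hsplit : ∀ ω, Sr W l ω = Sr W k ω + r ω := by
    intro ω
    unfold Sr SF
    rw [hr]
    unfold SF
    rw [Finset.range_eq_Ico, Finset.range_eq_Ico]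
    exact (Finset.sum_Ico_consecutive (fun i => V W i ω) (Nat.zero_le k) hkl).symm
  have hindep : IndepFun (Sr W k) r P := by
    rw [hr]
    unfold Sr
    apply indepSF W
    rw [Finset.range_eq_Ico]
    exact Finset.Ico_disjoint_Ico_consecutive 0 k l
  set σ : ℝ := b * (1 - b) with hσ
  have hpt : ∀ ω, gg W k ω * gg W l ω
      = (gg W k ω) ^ 2 + (((k : ℝ) * σ - (l : ℝ) * σ) * gg W k ω +
        (2 * ((gg W k ω * (1 + Sr W k ω)) * r ω) + (gg W k ω) * (r ω) ^ 2)) := by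
    intro ω
    have h := hsplit ω
    unfold gg
    rw [h, ← hσ]
    ring
  -- integrability
  have hcr : (0:ℝ) ≤ ((Finset.Ico k l).card : ℝ) := by positivity
  have hbr : ∀ ω, |r ω| ≤ ((Finset.Ico k l).card : ℝ) := fun ω => boundSF W _ ω
  have hmr : Measurable r := measSF W _
  have i1 : Integrable (fun ω => (gg W k ω) ^ 2) P :=
    intb ((measg W k).pow_const 2) ((CG k) ^ 2) (fun ω => by
      rw [abs_pow]
      exact pow_le_pow_left₀ (abs_nonneg _) (boundg W k ω) 2)
  have i2 : Integrable (fun ω => gg W k ω * (1 + Sr W k ω) * r ω) P := by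
    apply intb (((measg W k).mul (measurable_const.add (measSr W k))).mul hmr)
      ((CG k * ((k : ℝ) + 1)) * ((Finset.Ico k l).card : ℝ))
    intro ω
    simp only [Pi.mul_apply, Pi.add_apply]; rw [abs_mul, abs_mul]
    have hb1 : |1 + Sr W k ω| ≤ (k : ℝ) + 1 := by
      calc |1 + Sr W k ω| ≤ |(1:ℝ)| + |Sr W k ω| := abs_add_le _ _
      _ ≤ 1 + (k : ℝ) := by rw [abs_one]; exact add_le_add_right (boundSr W k ω) 1
      _ = (k : ℝ) + 1 := by ring
    apply mul_le_mul _ (hbr ω) (abs_nonneg _) (mul_nonneg (CG_nonneg k) (by positivity))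
    exact mul_le_mul (boundg W k ω) hb1 (abs_nonneg _) (CG_nonneg k)
  have i3 : Integrable (fun ω => gg W k ω * (r ω) ^ 2) P := by
    apply intb ((measg W k).mul (hmr.pow_const 2)) (CG k * ((Finset.Ico k l).card : ℝ) ^ 2)
    intro ω
    simp only [Pi.mul_apply]; rw [abs_mul, abs_pow]
    exact mul_le_mul (boundg W k ω) (pow_le_pow_left₀ (abs_nonneg _) (hbr ω) 2)
      (by positivity) (CG_nonneg k)
  -- independence factorizations
  have I3 : ∫ ω, gg W k ω * (1 + Sr W k ω) * r ω ∂P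
      = (∫ ω, gg W k ω * (1 + Sr W k ω) ∂P) * ∫ ω, r ω ∂P :=
    Emul hindep (measSr W k) hmr
      (F := fun x => ((1 + x) ^ 2 - (1 + (k : ℝ) * σ)) * (1 + x)) (G := fun x => x)
      ((((measurable_const.add measurable_id).pow_const 2).sub measurable_const).mul
        (measurable_const.add measurable_id)) measurable_id
  have I4 : ∫ ω, gg W k ω * (r ω) ^ 2 ∂P
      = (∫ ω, gg W k ω ∂P) * ∫ ω, (r ω) ^ 2 ∂P :=
    Emul hindep (measSr W k) hmr
      (F := fun x => (1 + x) ^ 2 - (1 + (k : ℝ) * σ)) (G := fun x => x ^ 2)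
      (((measurable_const.add measurable_id).pow_const 2).sub measurable_const)
      (measurable_id.pow_const 2)
  have hEr : ∫ ω, r ω ∂P = 0 := E_SF W _
  have e1 : ∫ ω, ((gg W k ω) ^ 2 + (((k : ℝ) * σ - (l : ℝ) * σ) * gg W k ω +
        (2 * ((gg W k ω * (1 + Sr W k ω)) * r ω) + (gg W k ω) * (r ω) ^ 2))) ∂P
      = (∫ ω, (gg W k ω) ^ 2 ∂P) + ∫ ω, (((k : ℝ) * σ - (l : ℝ) * σ) * gg W k ω +
        (2 * ((gg W k ω * (1 + Sr W k ω)) * r ω) + (gg W k ω) * (r ω) ^ 2)) ∂P :=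
    integral_add i1 (((intg W k).const_mul _).add ((i2.const_mul 2).add i3))
  have e2 : ∫ ω, (((k : ℝ) * σ - (l : ℝ) * σ) * gg W k ω +
        (2 * ((gg W k ω * (1 + Sr W k ω)) * r ω) + (gg W k ω) * (r ω) ^ 2)) ∂P
      = (∫ ω, ((k : ℝ) * σ - (l : ℝ) * σ) * gg W k ω ∂P) +
        ∫ ω, (2 * ((gg W k ω * (1 + Sr W k ω)) * r ω) + (gg W k ω) * (r ω) ^ 2) ∂P :=
    integral_add ((intg W k).const_mul _) ((i2.const_mul 2).add i3)
  have e3 : ∫ ω, (2 * ((gg W k ω * (1 + Sr W k ω)) * r ω) + (gg W k ω) * (r ω) ^ 2) ∂P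
      = (∫ ω, 2 * ((gg W k ω * (1 + Sr W k ω)) * r ω) ∂P) + ∫ ω, (gg W k ω) * (r ω) ^ 2 ∂P :=
    integral_add (i2.const_mul 2) i3
  have h2 : ∫ ω, (gg W k ω * (1 + Sr W k ω)) * r ω ∂P = 0 := by rw [I3, hEr, mul_zero]
  rw [integral_congr_ae (ae_of_all _ hpt), e1, e2, e3, integral_const_mul, integral_const_mul,
    E_g, I4, E_g, h2]
  ring

end QSL
namespace QSL

variable {Ω : Type*} [MeasurableSpace Ω] {P : Measure Ω} [IsProbabilityMeasure P]
  {b : ℝ} (W : RandomStepSizes P b)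

def dd (m : ℕ) : ℝ := ((m : ℝ) + 1) * ((m : ℝ) + 2)

lemma dd_pos (m : ℕ) : 0 < dd m := by unfold dd; positivity

lemma one_le_dd (m : ℕ) : 1 ≤ dd m := by
  unfold dd; nlinarith [Nat.cast_nonneg (α := ℝ) m]

def Dp (n : ℕ) (ω : Ω) : ℝ := ∑ m ∈ Finset.range n, gg W m ω / dd m

lemma measDp (n : ℕ) : Measurable (Dp W n) :=
  Finset.measurable_sum _ (fun m _ => (measg W m).div_const _)

lemma boundDp (n : ℕ) (ω : Ω) : |Dp W n ω| ≤ ∑ m ∈ Finset.range n, CG m := by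
  calc |Dp W n ω| ≤ ∑ m ∈ Finset.range n, |gg W m ω / dd m| := Finset.abs_sum_le_sum_abs _ _
  _ ≤ ∑ m ∈ Finset.range n, CG m := by
      apply Finset.sum_le_sum
      intro m _
      rw [abs_div, abs_of_pos (dd_pos m)]
      calc |gg W m ω| / dd m ≤ |gg W m ω| / 1 :=
        div_le_div_of_nonneg_left (abs_nonneg _) one_pos (one_le_dd m)
      _ = |gg W m ω| := div_one _
      _ ≤ CG m := boundg W m ω

lemma intDp (n : ℕ) : Integrable (Dp W n) P := intb (measDp W n) _ (boundDp W n)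

lemma intDp2 (n : ℕ) : Integrable (fun ω => (Dp W n ω) ^ 2) P :=
  intb ((measDp W n).pow_const 2) ((∑ m ∈ Finset.range n, CG m) ^ 2) (fun ω => by
    rw [abs_pow]
    exact pow_le_pow_left₀ (abs_nonneg _) (boundDp W n ω) 2)

lemma intDpg (n j : ℕ) : Integrable (fun ω => Dp W n ω * gg W j ω) P :=
  intb ((measDp W n).mul (measg W j)) ((∑ m ∈ Finset.range n, CG m) * CG j) (fun ω => by
    rw [abs_mul]
    exact mul_le_mul (boundDp W n ω) (boundg W j ω) (abs_nonneg _)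
      (Finset.sum_nonneg (fun m _ => CG_nonneg m)))

lemma intgg (j m : ℕ) : Integrable (fun ω => gg W j ω * gg W m ω) P :=
  intb ((measg W j).mul (measg W m)) (CG j * CG m) (fun ω => by
    rw [abs_mul]
    exact mul_le_mul (boundg W j ω) (boundg W m ω) (abs_nonneg _) (CG_nonneg j))

lemma EDpg (n : ℕ) : ∫ ω, Dp W n ω * gg W n ω ∂P ≤ 20 * (n : ℝ) := by
  have hpt : ∀ ω, Dp W n ω * gg W n ω
      = ∑ k ∈ Finset.range n, (gg W k ω * gg W n ω) / dd k := by
    intro ω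
    unfold Dp
    rw [Finset.sum_mul]
    apply Finset.sum_congr rfl
    intro k _
    ring
  rw [integral_congr_ae (ae_of_all _ hpt),
    integral_finset_sum _ (fun k _ => (intgg W k n).div_const _)]
  have hterm : ∀ k ∈ Finset.range n, ∫ ω, (gg W k ω * gg W n ω) / dd k ∂P ≤ 20 := by
    intro k hk
    have hkn : k ≤ n := (Finset.mem_range.mp hk).le
    rw [integral_div, cross W hkn]
    rw [div_le_iff₀ (dd_pos k)]
    calc ∫ ω, (gg W k ω) ^ 2 ∂P ≤ 20 * ((k : ℝ) + 1) ^ 2 := Eg2_bound W k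
    _ ≤ 20 * dd k := by
        unfold dd
        nlinarith [Nat.cast_nonneg (α := ℝ) k]
  calc ∑ k ∈ Finset.range n, ∫ ω, (gg W k ω * gg W n ω) / dd k ∂P
      ≤ ∑ _k ∈ Finset.range n, (20:ℝ) := Finset.sum_le_sum hterm
  _ = 20 * (n : ℝ) := by simp [mul_comm]

lemma EDp2 (n : ℕ) : ∫ ω, (Dp W n ω) ^ 2 ∂P ≤ 60 * (harmonic n : ℝ) := by
  induction n with
  | zero => simp [Dp, harmonic]
  | succ n ih =>
    have hpt : ∀ ω, (Dp W (n+1) ω) ^ 2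
        = (Dp W n ω) ^ 2 + ((2 / dd n) * (Dp W n ω * gg W n ω)
          + (1 / (dd n) ^ 2) * (gg W n ω) ^ 2) := by
      intro ω
      have hsp : Dp W (n+1) ω = Dp W n ω + gg W n ω / dd n := Finset.sum_range_succ _ n
      rw [hsp]
      have := (dd_pos n).ne'
      field_simp
      ring
    have ig2 : Integrable (fun ω => (gg W n ω) ^ 2) P :=
      intb ((measg W n).pow_const 2) ((CG n) ^ 2) (fun ω => by
        rw [abs_pow]; exact pow_le_pow_left₀ (abs_nonneg _) (boundg W n ω) 2)
    have e1 : ∫ ω, ((Dp W n ω) ^ 2 + ((2 / dd n) * (Dp W n ω * gg W n ω)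
          + (1 / (dd n) ^ 2) * (gg W n ω) ^ 2)) ∂P
        = (∫ ω, (Dp W n ω) ^ 2 ∂P) + ∫ ω, ((2 / dd n) * (Dp W n ω * gg W n ω)
          + (1 / (dd n) ^ 2) * (gg W n ω) ^ 2) ∂P :=
      integral_add (intDp2 W n) (((intDpg W n n).const_mul _).add (ig2.const_mul _))
    have e2 : ∫ ω, ((2 / dd n) * (Dp W n ω * gg W n ω)
          + (1 / (dd n) ^ 2) * (gg W n ω) ^ 2) ∂P
        = (∫ ω, (2 / dd n) * (Dp W n ω * gg W n ω) ∂P)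
          + ∫ ω, (1 / (dd n) ^ 2) * (gg W n ω) ^ 2 ∂P :=
      integral_add ((intDpg W n n).const_mul _) (ig2.const_mul _)
    rw [integral_congr_ae (ae_of_all _ hpt), e1, e2, integral_const_mul, integral_const_mul]
    have hd := dd_pos n
    have t1 : (2 / dd n) * ∫ ω, Dp W n ω * gg W n ω ∂P ≤ 40 / ((n:ℝ) + 1) := by
      calc (2 / dd n) * ∫ ω, Dp W n ω * gg W n ω ∂P ≤ (2 / dd n) * (20 * (n:ℝ)) := by
            apply mul_le_mul_of_nonneg_left (EDpg W n) (by positivity)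
      _ ≤ 40 / ((n:ℝ) + 1) := by
          rw [div_mul_eq_mul_div, div_le_div_iff₀ hd (by positivity)]
          unfold dd
          nlinarith [Nat.cast_nonneg (α := ℝ) n]
    have t2 : (1 / (dd n) ^ 2) * ∫ ω, (gg W n ω) ^ 2 ∂P ≤ 20 / ((n:ℝ) + 1) := by
      calc (1 / (dd n) ^ 2) * ∫ ω, (gg W n ω) ^ 2 ∂P
          ≤ (1 / (dd n) ^ 2) * (20 * ((n : ℝ) + 1) ^ 2) := by
            apply mul_le_mul_of_nonneg_left (Eg2_bound W n) (by positivity)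
      _ ≤ 20 / ((n:ℝ) + 1) := by
          rw [div_mul_eq_mul_div, one_mul, div_le_div_iff₀ (by positivity) (by positivity)]
          unfold dd
          nlinarith [Nat.cast_nonneg (α := ℝ) n]
    have hh : (harmonic (n+1) : ℝ) = (harmonic n : ℝ) + 1 / ((n:ℝ) + 1) := by
      rw [harmonic_succ]
      push_cast
      ring
    rw [hh]
    have : 40 / ((n:ℝ) + 1) + 20 / ((n:ℝ) + 1) = 60 * (1 / ((n:ℝ) + 1)) := by ring
    linarith [ih, t1, t2]

lemma cheb (n : ℕ) (ε : ℝ) (hε : 0 < ε) :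
    (P {ω | ε ≤ |Dp W n ω|}).toReal ≤ 60 * (harmonic n : ℝ) / ε ^ 2 := by
  have hsub : {ω | ε ≤ |Dp W n ω|} ⊆ {ω | ε ^ 2 ≤ (Dp W n ω) ^ 2} := by
    intro ω hω
    simp only [Set.mem_setOf_eq] at *
    calc ε ^ 2 ≤ |Dp W n ω| ^ 2 := pow_le_pow_left₀ hε.le hω 2
    _ = (Dp W n ω) ^ 2 := sq_abs _
  have h1 := mul_meas_ge_le_integral_of_nonneg
    (ae_of_all P (fun ω => sq_nonneg (Dp W n ω))) (intDp2 W n) (ε ^ 2)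
  have h2 : (P {ω | ε ≤ |Dp W n ω|}).toReal ≤ (P {ω | ε ^ 2 ≤ (Dp W n ω) ^ 2}).toReal :=
    ENNReal.toReal_mono (measure_ne_top P _) (measure_mono hsub)
  rw [le_div_iff₀ (by positivity : (0:ℝ) < ε ^ 2)]
  calc (P {ω | ε ≤ |Dp W n ω|}).toReal * ε ^ 2
      ≤ (P {ω | ε ^ 2 ≤ (Dp W n ω) ^ 2}).toReal * ε ^ 2 :=
        mul_le_mul_of_nonneg_right h2 (by positivity)
  _ = ε ^ 2 * (P {ω | ε ^ 2 ≤ (Dp W n ω) ^ 2}).toReal := mul_comm _ _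
  _ ≤ ∫ ω, (Dp W n ω) ^ 2 ∂P := h1
  _ ≤ 60 * (harmonic n : ℝ) := EDp2 W n

end QSL
namespace QSL

variable {Ω : Type*} [MeasurableSpace Ω] {P : Measure Ω} [IsProbabilityMeasure P]
  {b : ℝ} (W : RandomStepSizes P b)

def phi (i : ℕ) : ℕ := 2 ^ ((i + 1) ^ 2)

def LL (n : ℕ) : ℝ := Real.log ((n : ℝ) + 1)

lemma phi_strictMono : StrictMono phi := by
  intro i j hij
  apply Nat.pow_lt_pow_right Nat.one_lt_two
  have : i + 1 < j + 1 := by omega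
  exact Nat.pow_lt_pow_left this (by norm_num)

lemma LL_mono : Monotone LL := by
  intro m n hmn
  apply Real.log_le_log (by positivity)
  have : (m : ℝ) ≤ n := Nat.cast_le.mpr hmn
  linarith

lemma LL_lower (i : ℕ) : (((i : ℝ) + 1) ^ 2) * Real.log 2 ≤ LL (phi i) := by
  unfold LL phi
  have h1 : ((2 ^ ((i + 1) ^ 2) : ℕ) : ℝ) = (2 : ℝ) ^ ((i + 1) ^ 2) := by push_cast; ring
  rw [h1]
  have h2 : Real.log ((2:ℝ) ^ ((i + 1) ^ 2)) ≤ Real.log ((2:ℝ) ^ ((i + 1) ^ 2) + 1) :=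
    Real.log_le_log (by positivity) (by linarith)
  rw [Real.log_pow] at h2
  have h3 : (((i + 1) ^ 2 : ℕ) : ℝ) = ((i : ℝ) + 1) ^ 2 := by push_cast; ring
  rw [h3] at h2
  exact h2

lemma LL_upper (i : ℕ) : LL (phi i) ≤ (((i : ℝ) + 1) ^ 2 + 1) * Real.log 2 := by
  unfold LL phi
  have h1 : ((2 ^ ((i + 1) ^ 2) : ℕ) : ℝ) = (2 : ℝ) ^ ((i + 1) ^ 2) := by push_cast; ring
  rw [h1]
  have h0 : (1:ℝ) ≤ (2:ℝ) ^ ((i + 1) ^ 2) := one_le_pow₀ (by norm_num)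
  have h2 : (2:ℝ) ^ ((i + 1) ^ 2) + 1 ≤ 2 * (2:ℝ) ^ ((i + 1) ^ 2) := by linarith
  calc Real.log ((2:ℝ) ^ ((i + 1) ^ 2) + 1) ≤ Real.log (2 * (2:ℝ) ^ ((i + 1) ^ 2)) :=
        Real.log_le_log (by positivity) h2
  _ = Real.log 2 + Real.log ((2:ℝ) ^ ((i + 1) ^ 2)) :=
        Real.log_mul (by norm_num) (by positivity)
  _ = Real.log 2 + (((i + 1) ^ 2 : ℕ) : ℝ) * Real.log 2 := by rw [Real.log_pow]
  _ = (((i : ℝ) + 1) ^ 2 + 1) * Real.log 2 := by push_cast; ring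

lemma LL_phi_ge_one (i : ℕ) : 1 ≤ LL (phi i) := by
  have h1 : Real.log 3 ≤ LL (phi i) := by
    unfold LL
    apply Real.log_le_log (by norm_num)
    have h2 : (3 : ℕ) ≤ phi i + 1 := by
      unfold phi
      have : 2 ^ 1 ≤ 2 ^ ((i+1)^2) := Nat.pow_le_pow_right (by norm_num)
        (Nat.one_le_pow 2 (i+1) (by omega))
      omega
    calc (3:ℝ) = ((3:ℕ) : ℝ) := by norm_num
    _ ≤ ((phi i + 1 : ℕ) : ℝ) := Nat.cast_le.mpr h2
    _ = (phi i : ℝ) + 1 := by push_cast; ring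
  have h2 : (1:ℝ) ≤ Real.log 3 := by
    rw [Real.le_log_iff_exp_le (by norm_num)]
    exact le_of_lt (lt_of_lt_of_le Real.exp_one_lt_d9 (by norm_num))
  linarith

lemma LL_phi_pos (i : ℕ) : 0 < LL (phi i) := lt_of_lt_of_le one_pos (LL_phi_ge_one i)

lemma LL_phi_lower' (i : ℕ) : (((i : ℝ) + 1) ^ 2) / 2 ≤ LL (phi i) := by
  have h1 := LL_lower i
  have h2 : (1:ℝ)/2 ≤ Real.log 2 := by
    have := Real.log_two_gt_d9
    linarith
  nlinarith [sq_nonneg ((i:ℝ) + 1)]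

lemma harmonic_le_LL (n : ℕ) : (harmonic n : ℝ) ≤ 1 + LL n := by
  have hlog : Real.log (n : ℝ) ≤ Real.log ((n:ℝ) + 1) := by
    rcases Nat.eq_zero_or_pos n with h | h
    · subst h
      simp
    · apply Real.log_le_log (by positivity)
      linarith
  calc (harmonic n : ℝ) ≤ 1 + Real.log n := harmonic_le_one_add_log n
  _ ≤ 1 + LL n := by unfold LL; linarith

lemma chebphi (i : ℕ) (δ : ℝ) (hδ : 0 < δ) :
    (P {ω | δ * LL (phi i) ≤ |Dp W (phi i) ω|}).toReal
      ≤ 240 / (δ ^ 2 * ((i : ℝ) + 1) ^ 2) := by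
  set L := LL (phi i) with hL
  have hLpos := LL_phi_pos i
  have hL1 := LL_phi_ge_one i
  have hLm := LL_phi_lower' i
  have hε : 0 < δ * L := by positivity
  have h1 := cheb W (phi i) (δ * L) hε
  have hH : (harmonic (phi i) : ℝ) ≤ 2 * L := by
    have := harmonic_le_LL (phi i)
    rw [← hL] at this
    linarith
  have hphi0 : 0 < phi i := by unfold phi; positivity
  have hH0 : (0:ℝ) ≤ (harmonic (phi i) : ℝ) := by
    exact_mod_cast (harmonic_pos hphi0.ne').le
  have hm2L : ((i : ℝ) + 1) ^ 2 ≤ 2 * L := by nlinarith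
  calc (P {ω | δ * L ≤ |Dp W (phi i) ω|}).toReal
      ≤ 60 * (harmonic (phi i) : ℝ) / (δ * L) ^ 2 := h1
  _ ≤ 240 / (δ ^ 2 * ((i : ℝ) + 1) ^ 2) := by
      rw [div_le_div_iff₀ (by positivity) (by positivity)]
      have key : (harmonic (phi i) : ℝ) * ((i : ℝ) + 1) ^ 2 ≤ (2 * L) * (2 * L) :=
        mul_le_mul hH hm2L (by positivity) (by positivity)
      have key2 := mul_le_mul_of_nonneg_left key (by positivity : (0:ℝ) ≤ 60 * δ ^ 2)
      nlinarith [key2]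

end QSL
namespace QSL

variable {Ω : Type*} [MeasurableSpace Ω] {P : Measure Ω} [IsProbabilityMeasure P]
  {b : ℝ} (W : RandomStepSizes P b)

lemma summable_aux (δ : ℝ) (hδ : 0 < δ) :
    Summable (fun i : ℕ => 240 / (δ ^ 2 * ((i : ℝ) + 1) ^ 2)) := by
  have h1 : Summable (fun n : ℕ => 1 / ((n : ℝ)) ^ 2) :=
    Real.summable_one_div_nat_pow.mpr (by norm_num)
  have h2 : Summable (fun n : ℕ => 1 / (((n : ℝ)) + 1) ^ 2) := by
    have := (summable_nat_add_iff 1).mpr h1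
    apply this.congr
    intro n
    push_cast
    ring
  have h3 := h2.mul_left (240 / δ ^ 2)
  apply h3.congr
  intro n
  field_simp

lemma as_phi : ∀ᵐ ω ∂P, Tendsto (fun i => Dp W (phi i) ω / LL (phi i)) atTop (nhds 0) := by
  have hBC : ∀ q : ℕ, ∀ᵐ ω ∂P, ∀ᶠ i in atTop,
      ω ∉ {ω' | (1 / ((q : ℝ) + 1)) * LL (phi i) ≤ |Dp W (phi i) ω'|} := by
    intro q
    have hδ : (0:ℝ) < 1 / ((q : ℝ) + 1) := by positivity
    apply ae_eventually_notMem
    have hb : ∀ i : ℕ, P {ω' | (1 / ((q : ℝ) + 1)) * LL (phi i) ≤ |Dp W (phi i) ω'|}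
        ≤ ENNReal.ofReal (240 / ((1 / ((q : ℝ) + 1)) ^ 2 * ((i : ℝ) + 1) ^ 2)) := by
      intro i
      rw [ENNReal.le_ofReal_iff_toReal_le (measure_ne_top P _) (by positivity)]
      exact chebphi W i _ hδ
    have hsum := summable_aux _ hδ
    have hne : (∑' i : ℕ, ENNReal.ofReal (240 / ((1 / ((q : ℝ) + 1)) ^ 2 * ((i : ℝ) + 1) ^ 2))) ≠ ⊤ := by
      rw [← ENNReal.ofReal_tsum_of_nonneg (fun i => by positivity) hsum]
      exact ENNReal.ofReal_ne_top
    exact ne_top_of_le_ne_top hne (ENNReal.tsum_le_tsum hb)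
  rw [← ae_all_iff] at hBC
  filter_upwards [hBC] with ω hω
  rw [Metric.tendsto_atTop]
  intro ε hε
  obtain ⟨q, hq⟩ := exists_nat_one_div_lt hε
  have h1 := hω q
  rw [eventually_atTop] at h1
  obtain ⟨N, hN⟩ := h1
  refine ⟨N, fun i hi => ?_⟩
  have h2 := hN i hi
  simp only [Set.mem_setOf_eq, not_le] at h2
  have hL := LL_phi_pos i
  rw [Real.dist_eq, sub_zero, abs_div, abs_of_pos hL, div_lt_iff₀ hL]
  calc |Dp W (phi i) ω| < (1 / ((q : ℝ) + 1)) * LL (phi i) := h2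
  _ ≤ ε * LL (phi i) := by
      apply mul_le_mul_of_nonneg_right _ hL.le
      exact_mod_cast hq.le

end QSL
namespace QSL

lemma interp {U L : ℕ → ℝ} {φ : ℕ → ℕ} {c : ℝ}
    (hU : Monotone U) (hU0 : ∀ n, 0 ≤ U n) (hLm : Monotone L) (hφ : StrictMono φ)
    (hL0 : 0 < L (φ 0))
    (h1 : Tendsto (fun i => U (φ i) / L (φ i)) atTop (nhds c))
    (h2 : Tendsto (fun i => L (φ (i + 1)) / L (φ i)) atTop (nhds 1)) :
    Tendsto (fun n => U n / L n) atTop (nhds c) := by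
  classical
  set ψ : ℕ → ℕ := fun n => Nat.findGreatest (fun i => φ i ≤ n) n with hψdef
  have hψ1 : ∀ n, φ 0 ≤ n → φ (ψ n) ≤ n := by
    intro n hn
    exact Nat.findGreatest_spec (P := fun i => φ i ≤ n) (Nat.zero_le n) hn
  have hψ2 : ∀ n, n < φ (ψ n + 1) := by
    intro n
    by_cases h : ψ n + 1 ≤ n
    · by_contra hc
      push_neg at hc
      exact Nat.findGreatest_is_greatest (Nat.lt_succ_self _) h hc
    · push_neg at h
      calc n < ψ n + 1 := h
      _ ≤ φ (ψ n + 1) := hφ.le_apply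
  have hψtop : Tendsto ψ atTop atTop := by
    rw [tendsto_atTop_atTop]
    intro B
    refine ⟨φ B, fun n hn => ?_⟩
    exact Nat.le_findGreatest (le_trans hφ.le_apply hn) hn
  have hLpos : ∀ n, φ 0 ≤ n → 0 < L n := fun n hn => lt_of_lt_of_le hL0 (hLm hn)
  have hLφpos : ∀ i, 0 < L (φ i) := fun i => lt_of_lt_of_le hL0 (hLm (hφ.monotone (Nat.zero_le i)))
  -- upper bound
  have hub : ∀ᶠ n in atTop, U n / L n
      ≤ (U (φ (ψ n + 1)) / L (φ (ψ n + 1))) * (L (φ (ψ n + 1)) / L (φ (ψ n))) := by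
    filter_upwards [eventually_ge_atTop (φ 0)] with n hn
    have hn1 : 0 < L n := hLpos n hn
    have hφψpos : 0 < L (φ (ψ n)) := hLφpos _
    have hφψ1pos : 0 < L (φ (ψ n + 1)) := hLφpos _
    have e : (U (φ (ψ n + 1)) / L (φ (ψ n + 1))) * (L (φ (ψ n + 1)) / L (φ (ψ n)))
        = U (φ (ψ n + 1)) / L (φ (ψ n)) := by
      field_simp
    rw [e]
    exact div_le_div₀ (hU0 _) (hU (le_of_lt (hψ2 n))) hφψpos (hLm (hψ1 n hn))
  -- lower bound
  have hlb : ∀ᶠ n in atTop, (U (φ (ψ n)) / L (φ (ψ n))) * (L (φ (ψ n)) / L (φ (ψ n + 1)))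
      ≤ U n / L n := by
    filter_upwards [eventually_ge_atTop (φ 0)] with n hn
    have hn1 : 0 < L n := hLpos n hn
    have hφψpos : 0 < L (φ (ψ n)) := hLφpos _
    have hφψ1pos : 0 < L (φ (ψ n + 1)) := hLφpos _
    have e : (U (φ (ψ n)) / L (φ (ψ n))) * (L (φ (ψ n)) / L (φ (ψ n + 1)))
        = U (φ (ψ n)) / L (φ (ψ n + 1)) := by
      field_simp
    rw [e]
    exact div_le_div₀ (le_trans (hU0 _) (hU (hψ1 n hn))) (hU (hψ1 n hn)) hn1
      (hLm (le_of_lt (hψ2 n)))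
  -- limits of the two bounding sequences
  have hF : Tendsto (fun i => (U (φ (i + 1)) / L (φ (i + 1))) * (L (φ (i + 1)) / L (φ i)))
      atTop (nhds (c * 1)) :=
    (h1.comp (tendsto_add_atTop_nat 1)).mul h2
  have hG : Tendsto (fun i => (U (φ i) / L (φ i)) * (L (φ i) / L (φ (i + 1))))
      atTop (nhds (c * 1)) := by
    have h2' : Tendsto (fun i => (L (φ (i + 1)) / L (φ i))⁻¹) atTop (nhds 1) := by
      have := h2.inv₀ one_ne_zero
      simpa using this
    have heq : ∀ i, (L (φ (i + 1)) / L (φ i))⁻¹ = L (φ i) / L (φ (i + 1)) := fun i => inv_div _ _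
    exact h1.mul (h2'.congr (fun i => heq i))
  rw [mul_one] at hF hG
  exact tendsto_of_tendsto_of_tendsto_of_le_of_le' (hG.comp hψtop) (hF.comp hψtop) hlb hub

lemma LL_ratio : Tendsto (fun i => LL (phi (i + 1)) / LL (phi i)) atTop (nhds 1) := by
  have hx : Tendsto (fun i : ℕ => 1 / ((i : ℝ) + 1)) atTop (nhds 0) :=
    tendsto_one_div_add_atTop_nhds_zero_nat
  have hlog2 : (0:ℝ) < Real.log 2 := Real.log_pos (by norm_num)
  -- upper bound sequence
  have hup : ∀ i : ℕ, LL (phi (i + 1)) / LL (phi i)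
      ≤ 1 + 2 * (1 / ((i : ℝ) + 1)) + 2 * (1 / ((i : ℝ) + 1)) ^ 2 := by
    intro i
    have ht : (0:ℝ) < (i : ℝ) + 1 := by positivity
    have h1 : LL (phi (i + 1)) ≤ ((((i : ℝ) + 2)) ^ 2 + 1) * Real.log 2 := by
      have := LL_upper (i + 1)
      have e : ((((i:ℕ) + 1 : ℕ) : ℝ) + 1) = (i : ℝ) + 2 := by push_cast; ring
      rw [e] at this
      exact this
    have h2 : (((i : ℝ) + 1) ^ 2) * Real.log 2 ≤ LL (phi i) := LL_lower i
    have h3 : LL (phi (i + 1)) / LL (phi i)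
        ≤ (((((i : ℝ) + 2)) ^ 2 + 1) * Real.log 2) / ((((i : ℝ) + 1) ^ 2) * Real.log 2) := by
      apply div_le_div₀ (by positivity) h1 (by positivity) h2
    have h4 : (((((i : ℝ) + 2)) ^ 2 + 1) * Real.log 2) / ((((i : ℝ) + 1) ^ 2) * Real.log 2)
        = ((((i : ℝ) + 2)) ^ 2 + 1) / (((i : ℝ) + 1) ^ 2) :=
      mul_div_mul_right _ _ hlog2.ne'
    have h5 : ((((i : ℝ) + 2)) ^ 2 + 1) / (((i : ℝ) + 1) ^ 2)
        = 1 + 2 * (1 / ((i : ℝ) + 1)) + 2 * (1 / ((i : ℝ) + 1)) ^ 2 := by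
      field_simp
      ring
    rw [h4, h5] at h3
    exact h3
  -- lower bound sequence
  have hlo : ∀ i : ℕ, (1 + 2 * (1 / ((i : ℝ) + 1)) + (1 / ((i : ℝ) + 1)) ^ 2)
      / (1 + (1 / ((i : ℝ) + 1)) ^ 2) ≤ LL (phi (i + 1)) / LL (phi i) := by
    intro i
    have ht : (0:ℝ) < (i : ℝ) + 1 := by positivity
    have h1 : (((i : ℝ) + 2) ^ 2) * Real.log 2 ≤ LL (phi (i + 1)) := by
      have := LL_lower (i + 1)
      have e : ((((i:ℕ) + 1 : ℕ) : ℝ) + 1) = (i : ℝ) + 2 := by push_cast; ring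
      rw [e] at this
      exact this
    have h2 : LL (phi i) ≤ (((i : ℝ) + 1) ^ 2 + 1) * Real.log 2 := LL_upper i
    have h3 : ((((i : ℝ) + 2) ^ 2) * Real.log 2) / ((((i : ℝ) + 1) ^ 2 + 1) * Real.log 2)
        ≤ LL (phi (i + 1)) / LL (phi i) := by
      apply div_le_div₀ (le_of_lt (LL_phi_pos (i+1))) h1 (LL_phi_pos i) h2
    have h4 : ((((i : ℝ) + 2) ^ 2) * Real.log 2) / ((((i : ℝ) + 1) ^ 2 + 1) * Real.log 2)
        = (((i : ℝ) + 2) ^ 2) / ((((i : ℝ) + 1) ^ 2 + 1)) :=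
      mul_div_mul_right _ _ hlog2.ne'
    have h5 : (((i : ℝ) + 2) ^ 2) / ((((i : ℝ) + 1) ^ 2 + 1))
        = (1 + 2 * (1 / ((i : ℝ) + 1)) + (1 / ((i : ℝ) + 1)) ^ 2)
          / (1 + (1 / ((i : ℝ) + 1)) ^ 2) := by
      rw [div_eq_div_iff (by positivity) (by positivity)]
      field_simp
      ring
    rw [h4, h5] at h3
    exact h3
  have hupt : Tendsto (fun i : ℕ => 1 + 2 * (1 / ((i : ℝ) + 1)) + 2 * (1 / ((i : ℝ) + 1)) ^ 2)
      atTop (nhds 1) := by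
    have := ((tendsto_const_nhds (x := (1:ℝ)) (f := atTop)).add (hx.const_mul 2)).add
      ((hx.pow 2).const_mul 2)
    simpa using this
  have hlot : Tendsto (fun i : ℕ => (1 + 2 * (1 / ((i : ℝ) + 1)) + (1 / ((i : ℝ) + 1)) ^ 2)
      / (1 + (1 / ((i : ℝ) + 1)) ^ 2)) atTop (nhds 1) := by
    have hnum : Tendsto (fun i : ℕ => 1 + 2 * (1 / ((i : ℝ) + 1)) + (1 / ((i : ℝ) + 1)) ^ 2)
        atTop (nhds 1) := by
      have := ((tendsto_const_nhds (x := (1:ℝ)) (f := atTop)).add (hx.const_mul 2)).add (hx.pow 2)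
      simpa using this
    have hden : Tendsto (fun i : ℕ => 1 + (1 / ((i : ℝ) + 1)) ^ 2) atTop (nhds 1) := by
      have := (tendsto_const_nhds (x := (1:ℝ)) (f := atTop)).add (hx.pow 2)
      simpa using this
    have := hnum.div hden one_ne_zero
    rw [div_one] at this; exact this
  exact tendsto_of_tendsto_of_tendsto_of_le_of_le hlot hupt hlo hup

end QSL
namespace QSL

lemma sum_one_div_dd (n : ℕ) : ∑ m ∈ Finset.range n, 1 / dd m = 1 - 1 / ((n:ℝ) + 1) := by
  have h : ∀ m : ℕ, 1 / dd m = 1 / ((m:ℝ) + 1) - 1 / (((m+1 : ℕ) : ℝ) + 1) := by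
    intro m
    unfold dd
    have h1 : ((m:ℝ) + 1) ≠ 0 := by positivity
    have h2 : ((m:ℝ) + 2) ≠ 0 := by positivity
    push_cast
    have h3 : (m:ℝ) + 1 + 1 = (m:ℝ) + 2 := by ring
    rw [h3, div_sub_div _ _ h1 h2]
    congr 1
    ring
  rw [Finset.sum_congr rfl (fun m _ => h m), Finset.sum_range_sub' (fun m => 1 / ((m:ℝ) + 1)) n]
  norm_num

lemma sum_m_div_dd (n : ℕ) :
    ∑ m ∈ Finset.range n, (m:ℝ) / dd m = (harmonic n : ℝ) - 2 + 2 / ((n:ℝ) + 1) := by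
  induction n with
  | zero => simp [harmonic]
  | succ n ih =>
    rw [Finset.sum_range_succ, ih, harmonic_succ]
    unfold dd
    have h1 : ((n:ℝ) + 1) ≠ 0 := by positivity
    have h2 : ((n:ℝ) + 2) ≠ 0 := by positivity
    push_cast
    field_simp
    ring

lemma LL_atTop : Tendsto LL atTop atTop := by
  apply Real.tendsto_log_atTop.comp
  apply tendsto_atTop_add_const_right
  exact tendsto_natCast_atTop_atTop

lemma det_lim (s : ℝ) :
    Tendsto (fun n : ℕ => (∑ m ∈ Finset.range n, (1 + (m:ℝ) * s) / dd m) / LL n)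
      atTop (nhds s) := by
  have hsum : ∀ n : ℕ, (∑ m ∈ Finset.range n, (1 + (m:ℝ) * s) / dd m)
      = s * LL n + ((1 - 1 / ((n:ℝ) + 1))
        + s * (((harmonic n : ℝ) - LL n) - 2 + 2 / ((n:ℝ) + 1))) := by
    intro n
    have h3 : ∀ m : ℕ, (1 + (m:ℝ) * s) / dd m = 1 / dd m + s * ((m:ℝ) / dd m) := by
      intro m
      have := (dd_pos m).ne'
      field_simp
    rw [Finset.sum_congr rfl (fun m _ => h3 m), Finset.sum_add_distrib, ← Finset.mul_sum,
      sum_one_div_dd, sum_m_div_dd]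
    ring
  have hinv : Tendsto (fun n => 1 / LL n) atTop (nhds 0) := by
    simpa [one_div, Pi.inv_def] using LL_atTop.inv_tendsto_atTop
  have hx : Tendsto (fun n : ℕ => 1 / ((n:ℝ) + 1)) atTop (nhds 0) :=
    tendsto_one_div_add_atTop_nhds_zero_nat
  have hγ : Tendsto (fun n : ℕ => (harmonic n : ℝ) - LL n) atTop
      (nhds Real.eulerMascheroniConstant) := Real.tendsto_harmonic_sub_log_add_one
  have hR : Tendsto (fun n : ℕ => (1 - 1 / ((n:ℝ) + 1))
      + s * (((harmonic n : ℝ) - LL n) - 2 + 2 / ((n:ℝ) + 1))) atTop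
      (nhds (1 + s * (Real.eulerMascheroniConstant - 2))) := by
    apply Tendsto.add
    · simpa using (tendsto_const_nhds (x := (1:ℝ)) (f := atTop)).sub hx
    · apply Tendsto.const_mul
      have h6 : Tendsto (fun n : ℕ => 2 / ((n:ℝ) + 1)) atTop (nhds 0) := by
        have := hx.const_mul 2
        simpa [mul_one_div, div_eq_mul_inv] using this
      have := (hγ.sub (tendsto_const_nhds (x := (2:ℝ)) (f := atTop))).add h6
      simpa using this
  have hev : (fun n : ℕ => (∑ m ∈ Finset.range n, (1 + (m:ℝ) * s) / dd m) / LL n)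
      =ᶠ[atTop] (fun n : ℕ => s + ((1 - 1 / ((n:ℝ) + 1))
        + s * (((harmonic n : ℝ) - LL n) - 2 + 2 / ((n:ℝ) + 1))) * (1 / LL n)) := by
    filter_upwards [eventually_ge_atTop 1] with n hn
    have hL1 : LL 1 = Real.log 2 := by unfold LL; norm_num
    have hL : 0 < LL n := by
      have := LL_mono hn
      rw [hL1] at this
      linarith [Real.log_pos (by norm_num : (1:ℝ) < 2)]
    rw [hsum n]
    field_simp
  have hfin : Tendsto (fun n : ℕ => s + ((1 - 1 / ((n:ℝ) + 1))
      + s * (((harmonic n : ℝ) - LL n) - 2 + 2 / ((n:ℝ) + 1))) * (1 / LL n)) atTop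
      (nhds (s + (1 + s * (Real.eulerMascheroniConstant - 2)) * 0)) :=
    tendsto_const_nhds.add (hR.mul hinv)
  rw [mul_zero, add_zero] at hfin
  exact Tendsto.congr' hev.symm hfin

end QSL
namespace QSL

variable {Ω : Type*} [MeasurableSpace Ω] {P : Measure Ω} [IsProbabilityMeasure P]
  {b : ℝ} (W : RandomStepSizes P b)

lemma Zstar_eq (i : ℕ) (ω : Ω) :
    W.Zstar (1 + i) ω - (((1 + i : ℕ) : ℝ) - 1) * (1 - b) = 1 + Sr W i ω := by
  unfold RandomStepSizes.Zstar
  have h1 : Finset.Icc 2 (1 + i) = Finset.Ico 2 (2 + i) := by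
    rw [← Finset.Ico_add_one_right_eq_Icc]
    congr 1
    omega
  rw [h1, Finset.sum_Ico_eq_sum_range]
  have h2 : 2 + i - 2 = i := by omega
  rw [h2]
  unfold Sr SF V
  rw [Finset.sum_sub_distrib, Finset.sum_const, Finset.card_range]
  have h3 : (∑ j ∈ Finset.range i, if W.Y (2 + j) ω = 0 then (0:ℝ) else 1)
      = ∑ j ∈ Finset.range i, if W.Y (j + 2) ω = 0 then (0:ℝ) else 1 := by
    apply Finset.sum_congr rfl
    intro j _
    rw [Nat.add_comm 2 j]
  rw [h3, nsmul_eq_mul]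
  push_cast
  ring

lemma target_eq (n : ℕ) (ω : Ω) :
    ∑ k ∈ Finset.Icc 1 n,
      (W.Zstar k ω - ((k : ℝ) - 1) * (1 - b)) ^ 2 / ((k : ℝ) * ((k : ℝ) + 1))
    = ∑ m ∈ Finset.range n, (1 + Sr W m ω) ^ 2 / dd m := by
  have h1 : Finset.Icc 1 n = Finset.Ico 1 (n + 1) := (Finset.Ico_add_one_right_eq_Icc 1 n).symm
  rw [h1, Finset.sum_Ico_eq_sum_range]
  have h2 : n + 1 - 1 = n := by omega
  rw [h2]
  apply Finset.sum_congr rfl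
  intro j _
  rw [Zstar_eq W j ω]
  unfold dd
  congr 1
  push_cast
  ring

end QSL

/-- The quadratic strong law for the number of moves:
`(1/log(n+1)) ∑_{k=1}^n (Z_k* - (k-1)(1-b))²/(k(k+1)) → b(1-b)` almost surely. -/
theorem randomStepSizes_moves_qsl
    {Ω : Type*} [MeasurableSpace Ω] {P : Measure Ω} [IsProbabilityMeasure P]
    {b : ℝ} (W : RandomStepSizes P b) :
    ∀ᵐ ω ∂P,
      Tendsto (fun n : ℕ =>
          (1 / Real.log ((n : ℝ) + 1)) *
            ∑ k ∈ Finset.Icc 1 n,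
              (W.Zstar k ω - ((k : ℝ) - 1) * (1 - b)) ^ 2 / ((k : ℝ) * ((k : ℝ) + 1)))
        atTop (nhds (b * (1 - b))) := by
  filter_upwards [QSL.as_phi W] with ω hω
  set σ2 : ℝ := b * (1 - b) with hσ2
  have hU : Monotone (fun n => ∑ m ∈ Finset.range n, (1 + QSL.Sr W m ω) ^ 2 / QSL.dd m) := by
    intro m n hmn
    apply Finset.sum_le_sum_of_subset_of_nonneg (Finset.range_subset_range.mpr hmn)
    intro k _ _
    have := QSL.dd_pos k
    positivity
  have hU0 : ∀ n, 0 ≤ ∑ m ∈ Finset.range n, (1 + QSL.Sr W m ω) ^ 2 / QSL.dd m := by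
    intro n
    apply Finset.sum_nonneg
    intro k _
    have := QSL.dd_pos k
    positivity
  have hA : ∀ n, (∑ m ∈ Finset.range n, (1 + QSL.Sr W m ω) ^ 2 / QSL.dd m)
      = QSL.Dp W n ω + ∑ m ∈ Finset.range n, (1 + (m : ℝ) * σ2) / QSL.dd m := by
    intro n
    unfold QSL.Dp
    rw [← Finset.sum_add_distrib]
    apply Finset.sum_congr rfl
    intro m _
    rw [← add_div]
    congr 1
    unfold QSL.gg
    rw [← hσ2]
    ring
  have h1 : Tendsto (fun i => (∑ m ∈ Finset.range (QSL.phi i), (1 + QSL.Sr W m ω) ^ 2 / QSL.dd m)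
      / QSL.LL (QSL.phi i)) atTop (nhds σ2) := by
    have hcomp := (QSL.det_lim σ2).comp QSL.phi_strictMono.tendsto_atTop
    have hsum := hω.add hcomp
    rw [zero_add] at hsum
    apply hsum.congr
    intro i
    simp only [Function.comp_apply]
    rw [hA (QSL.phi i), add_div]
  have hmain := QSL.interp hU hU0 QSL.LL_mono QSL.phi_strictMono (QSL.LL_phi_pos 0) h1 QSL.LL_ratio
  apply hmain.congr
  intro n
  rw [QSL.target_eq W n ω]
  unfold QSL.LL
  rw [one_div, inv_mul_eq_div]
end
end
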